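/- arXiv:2111.05771 — 3 statements merged into one kernel-verified Lean document; each statement's English description precedes it below -/
import Mathlib

section
/- No standard nonexpansive simple, properly ordered Bratteli-Vershik system is conjugate to any odometer. -/
set_option autoImplicit false

/-- An ordered Bratteli diagram: finite nonempty vertex sets `V n`, a single root
vertex at level `0`, finite edge sets `E n` (edges from level `n` to level `n+1`,
multiple edges allowed), every vertex has an outgoing edge, every non-root vertex
an incoming edge, and the edges into each vertex carry a linear order, encoded by
the relation `elt` which relates only edges with the same target. -/
structure BDiagram where
  V : ℕ → Type
  E : ℕ → Type
  fintV : ∀ n, Fintype (V n)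
  fintE : ∀ n, Fintype (E n)
  nonV : ∀ n, Nonempty (V n)
  rootSubsingleton : Subsingleton (V 0)
  src : ∀ {n}, E n → V n
  tgt : ∀ {n}, E n → V (n + 1)
  hasOut : ∀ (n : ℕ) (v : V n), ∃ e : E n, src e = v
  hasIn : ∀ (n : ℕ) (v : V (n + 1)), ∃ e : E n, tgt e = v
  elt : ∀ {n}, E n → E n → Prop
  elt_tgt : ∀ (n : ℕ) (e f : E n), elt e f → tgt e = tgt f
  elt_irrefl : ∀ (n : ℕ) (e : E n), ¬ elt e e
  elt_trans : ∀ (n : ℕ) (e f g : E n), elt e f → elt f g → elt e g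
  elt_total : ∀ (n : ℕ) (e f : E n), tgt e = tgt f → e ≠ f → elt e f ∨ elt f e

namespace BDiagram

variable (B : BDiagram)

def castV {m n : ℕ} (h : m = n) (v : B.V m) : B.V n := h ▸ v

/-- An edge is minimal if no edge (into the same target) is below it. -/
def IsMinEdge {n : ℕ} (e : B.E n) : Prop := ∀ e' : B.E n, ¬ B.elt e' e

/-- An edge is maximal if no edge (into the same target) is above it. -/
def IsMaxEdge {n : ℕ} (e : B.E n) : Prop := ∀ e' : B.E n, ¬ B.elt e e'

/-- The space of infinite paths from the root. -/
def PathSpace : Type := { x : ∀ n, B.E n // ∀ n, B.tgt (x n) = B.src (x (n + 1)) }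

def IsMinPath (x : B.PathSpace) : Prop := ∀ n, B.IsMinEdge (x.1 n)

def IsMaxPath (x : B.PathSpace) : Prop := ∀ n, B.IsMaxEdge (x.1 n)

/-- Properly ordered: unique minimal and unique maximal path. -/
def ProperlyOrdered : Prop :=
  (∃! x : B.PathSpace, B.IsMinPath x) ∧ (∃! x : B.PathSpace, B.IsMaxPath x)

/-- The partial order on cofinal paths: `x < y` iff they eventually agree and at the
last disagreement the edge of `x` is below the edge of `y`. -/
def pathLT (x y : B.PathSpace) : Prop :=
  ∃ N : ℕ, B.elt (x.1 N) (y.1 N) ∧ ∀ n : ℕ, N < n → x.1 n = y.1 n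

/-- `T` is the Vershik map: each non-maximal path goes to its successor, and each
maximal path goes to a minimal path. -/
def IsVershik (T : B.PathSpace ≃ B.PathSpace) : Prop :=
  (∀ x : B.PathSpace, ¬ B.IsMaxPath x →
    B.pathLT x (T x) ∧ ∀ z : B.PathSpace, B.pathLT x z → ¬ B.pathLT z (T x)) ∧
  (∀ x : B.PathSpace, B.IsMaxPath x → B.IsMinPath (T x))

/-- `f` is a chain of consecutive edges on levels `[a, b)`. -/
def SegOn (f : ∀ i, B.E i) (a b : ℕ) : Prop :=
  ∀ i : ℕ, a ≤ i → i + 1 < b → B.tgt (f i) = B.src (f (i + 1))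

/-- Simplicity: some telescoping has complete connections between adjacent levels. -/
def Simple : Prop :=
  ∃ ns : ℕ → ℕ, StrictMono ns ∧ ns 0 = 0 ∧
    ∀ (l c : ℕ), ns (l + 1) = c + 1 →
      ∀ (v : B.V (ns l)) (w : B.V (c + 1)),
        ∃ f : ∀ i, B.E i, B.SegOn f (ns l) (c + 1) ∧ B.src (f (ns l)) = v ∧ B.tgt (f c) = w

/-- The natural (Cantor) topology on the path space, induced from the product of
the discrete topologies on the edge sets. -/
def pathTop : TopologicalSpace B.PathSpace :=
  TopologicalSpace.induced Subtype.val (@Pi.topologicalSpace ℕ B.E (fun _ => ⊥))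

/-- Integer iterates of a bijection of the path space. -/
def iterZ (T : B.PathSpace ≃ B.PathSpace) (m : ℤ) : B.PathSpace ≃ B.PathSpace :=
  (T : Equiv.Perm B.PathSpace) ^ m

/-- Two paths have the same `k`-coding: for every time `m` the initial segments of
`T^m x` and `T^m y` from the root to level `k` coincide. -/
def SameCoding (T : B.PathSpace ≃ B.PathSpace) (k : ℕ) (x y : B.PathSpace) : Prop :=
  ∀ (m : ℤ) (i : ℕ), i < k → ((B.iterZ T m) x).1 i = ((B.iterZ T m) y).1 i

/-- A depth `k` pair: distinct paths with the same `k`-coding but not the same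
`(k+1)`-coding. -/
def DepthPair (T : B.PathSpace ≃ B.PathSpace) (k : ℕ) (x y : B.PathSpace) : Prop :=
  x ≠ y ∧ B.SameCoding T k x y ∧ ¬ B.SameCoding T (k + 1) x y

/-- The pair `x, y` has a `j` cut: for some time `m`, both `T^m x` and `T^m y` are
minimal from the root into level `j`. -/
def HasCut (T : B.PathSpace ≃ B.PathSpace) (j : ℕ) (x y : B.PathSpace) : Prop :=
  ∃ m : ℤ, (∀ i : ℕ, i < j → B.IsMinEdge (((B.iterZ T m) x).1 i)) ∧
    (∀ i : ℕ, i < j → B.IsMinEdge (((B.iterZ T m) y).1 i))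

/-- Nonexpansive: for every `k ≥ 1` there are two distinct paths with the same
`k`-coding. -/
def Nonexpansive (T : B.PathSpace ≃ B.PathSpace) : Prop :=
  ∀ k : ℕ, 1 ≤ k → ∃ x y : B.PathSpace, x ≠ y ∧ B.SameCoding T k x y

/-- Well timed: for every `k ≥ 1` and every `j > k` there is a depth `k` pair with
a `j` cut. -/
def WellTimed (T : B.PathSpace ≃ B.PathSpace) : Prop :=
  ∀ k : ℕ, 1 ≤ k → ∀ j : ℕ, k < j →
    ∃ x y : B.PathSpace, B.DepthPair T k x y ∧ B.HasCut T j x y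

/-- Very well timed: for every `k ≥ 1` there is a depth `k` pair having a `j` cut
for every `j > k`. -/
def VeryWellTimed (T : B.PathSpace ≃ B.PathSpace) : Prop :=
  ∀ k : ℕ, 1 ≤ k →
    ∃ x y : B.PathSpace, B.DepthPair T k x y ∧ ∀ j : ℕ, k < j → B.HasCut T j x y

/-- Weakly well timed: for infinitely many `k ≥ 1`, for every `j > k` there is a
depth `k` pair with a `j` cut. -/
def WeaklyWellTimed (T : B.PathSpace ≃ B.PathSpace) : Prop :=
  ∀ K : ℕ, ∃ k : ℕ, K ≤ k ∧ 1 ≤ k ∧ ∀ j : ℕ, k < j →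
    ∃ x y : B.PathSpace, B.DepthPair T k x y ∧ B.HasCut T j x y

/-- Untimed: for every `k ≥ 1` there is a `j > k` such that no depth `k` pair has a
`j` cut. -/
def Untimed (T : B.PathSpace ≃ B.PathSpace) : Prop :=
  ∀ k : ℕ, 1 ≤ k → ∃ j : ℕ, k < j ∧
    ∀ x y : B.PathSpace, B.DepthPair T k x y → ¬ B.HasCut T j x y

/-- Very untimed: for every `k ≥ 1`, no depth `k` pair has a `(k+1)` cut. -/
def VeryUntimed (T : B.PathSpace ≃ B.PathSpace) : Prop :=
  ∀ k : ℕ, 1 ≤ k →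
    ∀ x y : B.PathSpace, B.DepthPair T k x y → ¬ B.HasCut T (k + 1) x y

/-- Finite paths from the root to level `n`. -/
def FinPath (n : ℕ) : Type :=
  { f : (i : Fin n) → B.E i.val //
    ∀ (i : ℕ) (h : i + 1 < n), B.tgt (f ⟨i, by omega⟩) = B.src (f ⟨i + 1, h⟩) }

/-- The lexicographic (from the end) order on finite paths to level `n` induced by
the orders on the edges. -/
def finLT {n : ℕ} (p q : B.FinPath n) : Prop :=
  ∃ (N : ℕ) (h : N < n), B.elt (p.1 ⟨N, h⟩) (q.1 ⟨N, h⟩) ∧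
    ∀ (i : ℕ) (hi : i < n), N < i → p.1 ⟨i, hi⟩ = q.1 ⟨i, hi⟩

/-- The finite path `p` to level `n` ends at the vertex `v`. -/
def EndsAt {n : ℕ} (p : B.FinPath n) (v : B.V n) : Prop :=
  ∀ (m : ℕ) (h : n = m + 1), B.tgt (p.1 ⟨m, by omega⟩) = B.castV h v

/-- The initial segment of an infinite path, from the root to level `n`. -/
def pathInit (x : B.PathSpace) (n : ℕ) : B.FinPath n :=
  ⟨fun i => x.1 i.val, fun i _ => x.2 i⟩

/-- The vertex of an infinite path at level `n`. -/
def pathVert (x : B.PathSpace) (n : ℕ) : B.V n := B.src (x.1 n)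

theorem pathInit_endsAt (x : B.PathSpace) (n : ℕ) :
    B.EndsAt (B.pathInit x n) (B.pathVert x n) := by
  intro m h
  subst h
  exact x.2 m

/-- Truncation of a finite path to a lower level. -/
def truncTo {n : ℕ} (k : ℕ) (hk : k ≤ n) (p : B.FinPath n) : B.FinPath k :=
  ⟨fun i => p.1 ⟨i.val, by omega⟩, fun i h => p.2 i (by omega)⟩

/-- Paths `x, x'` are `k`-equivalent at level `n`: there is an order isomorphism
between the sets of finite paths from the root into their level-`n` vertices which
preserves truncations to level `k` (equality of `k`-basic blocks) and which matches
the initial segment of `x` with the initial segment of `x'` (the "dot" is in the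
same place). -/
def KEquivAt (k n : ℕ) (x x' : B.PathSpace) : Prop :=
  ∃ φ : { p : B.FinPath n // B.EndsAt p (B.pathVert x n) } ≃
      { p : B.FinPath n // B.EndsAt p (B.pathVert x' n) },
    (∀ p q, B.finLT p.1 q.1 ↔ B.finLT (φ p).1 (φ q).1) ∧
    (∀ p (i : ℕ) (hik : i < k) (hin : i < n), ((φ p).1).1 ⟨i, hin⟩ = (p.1).1 ⟨i, hin⟩) ∧
    φ ⟨B.pathInit x n, B.pathInit_endsAt x n⟩ = ⟨B.pathInit x' n, B.pathInit_endsAt x' n⟩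

/-- Paths are `k`-equivalent: they agree from the root to level `k` and are
`k`-equivalent at every level `n > k`. -/
def KEquivPaths (k : ℕ) (x x' : B.PathSpace) : Prop :=
  (∀ i : ℕ, i < k → x.1 i = x'.1 i) ∧ ∀ n : ℕ, k < n → B.KEquivAt k n x x'

/-- Standard nonexpansive: for every `k ≥ 1` there is a pair of distinct
`k`-equivalent paths. -/
def SNE : Prop := ∀ k : ℕ, 1 ≤ k → ∃ x x' : B.PathSpace, x ≠ x' ∧ B.KEquivPaths k x x'

/-!  ### Telescoping  -/

theorem castV_eq_of_heq {m n : ℕ} (h : m = n) {v : B.V m} {w : B.V n} (hw : HEq v w) :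
    B.castV h v = w := by
  subst h
  exact eq_of_heq hw

theorem castV_heq {m n : ℕ} (h : m = n) (v : B.V m) : HEq (B.castV h v) v := by
  subst h
  rfl

theorem castV_inj {m n : ℕ} (h : m = n) {v w : B.V m}
    (hvw : B.castV h v = B.castV h w) : v = w := by
  subst h
  exact hvw

def castE {m n : ℕ} (h : m = n) (e : B.E m) : B.E n := h ▸ e

noncomputable def chainFrom (a : ℕ) (v : B.V a) : (i : ℕ) → B.E (a + i)
  | 0 => (B.hasOut a v).choose
  | i + 1 => (B.hasOut (a + i + 1) (B.tgt (chainFrom a v i))).choose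

theorem chainFrom_src_zero (a : ℕ) (v : B.V a) : B.src (B.chainFrom a v 0) = v :=
  (B.hasOut a v).choose_spec

theorem chainFrom_src_succ (a : ℕ) (v : B.V a) (i : ℕ) :
    B.src (B.chainFrom a v (i + 1)) = B.tgt (B.chainFrom a v i) :=
  (B.hasOut (a + i + 1) (B.tgt (B.chainFrom a v i))).choose_spec

noncomputable def chainTo (a : ℕ) : (j : ℕ) → (w : B.V (a + j + 1)) → (i : ℕ) → i ≤ j → B.E (a + i)
  | 0, w, i, _ => B.castE (by omega : a + 0 = a + i) (B.hasIn a w).choose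
  | j + 1, w, i, _ =>
      if h : i ≤ j then chainTo a j (B.src (B.hasIn (a + j + 1) w).choose) i h
      else B.castE (by omega : a + (j + 1) = a + i) (B.hasIn (a + j + 1) w).choose

theorem chainTo_tgt_last (a : ℕ) : ∀ (j : ℕ) (w : B.V (a + j + 1)),
    B.tgt (B.chainTo a j w j le_rfl) = w := by
  intro j w
  cases j with
  | zero =>
      simp only [chainTo]
      exact (B.hasIn a w).choose_spec
  | succ j =>
      simp only [chainTo]
      rw [dif_neg (by omega : ¬ j + 1 ≤ j)]
      exact (B.hasIn (a + j + 1) w).choose_spec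

theorem chainTo_chain (a : ℕ) : ∀ (j : ℕ) (w : B.V (a + j + 1)) (i : ℕ) (h : i + 1 ≤ j)
    (h' : i ≤ j), B.tgt (B.chainTo a j w i h') = B.src (B.chainTo a j w (i + 1) h) := by
  intro j
  induction j with
  | zero => intro w i h h'; omega
  | succ j ih =>
      intro w i h h'
      by_cases hij : i + 1 ≤ j
      · simp only [chainTo]
        rw [dif_pos (by omega : i ≤ j), dif_pos hij]
        exact ih _ i hij (by omega)
      · have hi : i = j := by omega
        subst hi
        simp only [chainTo]
        rw [dif_pos (le_refl i), dif_neg (by omega : ¬ i + 1 ≤ i)]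
        exact B.chainTo_tgt_last a i _


def TelE (a b : ℕ) : Type :=
  { f : (i : Fin (b - a)) → B.E (a + i.val) //
    ∀ (i : ℕ) (h : i + 1 < b - a), B.tgt (f ⟨i, by omega⟩) = B.src (f ⟨i + 1, h⟩) }

def telSrc {a b : ℕ} (hab : a < b) (f : B.TelE a b) : B.V a :=
  B.src (f.1 ⟨0, by omega⟩)

def telTgt {a b : ℕ} (hab : a < b) (f : B.TelE a b) : B.V b :=
  B.castV (by omega : a + (b - a - 1) + 1 = b) (B.tgt (f.1 ⟨b - a - 1, by omega⟩))

def telLT {a b : ℕ} (f g : B.TelE a b) : Prop :=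
  ∃ (N : ℕ) (h : N < b - a), B.elt (f.1 ⟨N, h⟩) (g.1 ⟨N, h⟩) ∧
    ∀ (i : ℕ) (hi : i < b - a), N < i → f.1 ⟨i, hi⟩ = g.1 ⟨i, hi⟩

noncomputable def Telescope (ns : ℕ → ℕ) (hmono : StrictMono ns) (h0 : ns 0 = 0) : BDiagram where
  V l := B.V (ns l)
  E l := B.TelE (ns l) (ns (l + 1))
  fintV l := B.fintV (ns l)
  fintE l := by
    classical
    letI : ∀ i : Fin (ns (l + 1) - ns l), Fintype (B.E (ns l + i.val)) := fun i => B.fintE _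
    exact Subtype.fintype _
  nonV l := B.nonV (ns l)
  rootSubsingleton := by show Subsingleton (B.V (ns 0)); rw [h0]; exact B.rootSubsingleton
  src {l} f := B.telSrc (hmono (Nat.lt_succ_self l)) f
  tgt {l} f := B.telTgt (hmono (Nat.lt_succ_self l)) f
  hasOut := by
    intro l v
    refine ⟨⟨fun i => B.chainFrom (ns l) v i.val,
      fun i h => (B.chainFrom_src_succ (ns l) v i).symm⟩, ?_⟩
    exact B.chainFrom_src_zero (ns l) v
  hasIn := by
    intro l w
    have hab : ns l < ns (l + 1) := hmono (Nat.lt_succ_self l)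
    have hj : ns l + (ns (l + 1) - ns l - 1) + 1 = ns (l + 1) := by omega
    refine ⟨⟨fun i => B.chainTo (ns l) (ns (l + 1) - ns l - 1) (B.castV hj.symm w) i.val
        (by omega), fun i h => B.chainTo_chain _ _ _ i (by omega) (by omega)⟩, ?_⟩
    show B.castV (by omega) (B.tgt (B.chainTo (ns l) (ns (l + 1) - ns l - 1)
      (B.castV hj.symm w) (ns (l + 1) - ns l - 1) (by omega))) = w
    rw [B.chainTo_tgt_last]
    exact B.castV_eq_of_heq _ (B.castV_heq _ w)
  elt {l} f g := B.telLT f g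
  elt_tgt := by
    rintro l f g ⟨N, hN, hlt, hgt⟩
    show B.telTgt _ f = B.telTgt _ g
    unfold telTgt
    refine congrArg (B.castV _) ?_
    rcases eq_or_lt_of_le (show N ≤ ns (l + 1) - ns l - 1 by omega) with h | h
    · subst h
      exact B.elt_tgt _ _ _ hlt
    · exact congrArg B.tgt (hgt _ (by omega) h)
  elt_irrefl := by
    rintro l f ⟨N, h, hlt, -⟩
    exact B.elt_irrefl _ _ hlt
  elt_trans := by
    rintro l f g h ⟨N₁, hN₁, hlt₁, hgt₁⟩ ⟨N₂, hN₂, hlt₂, hgt₂⟩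
    rcases lt_trichotomy N₁ N₂ with hc | hc | hc
    · exact ⟨N₂, hN₂, by rw [hgt₁ N₂ hN₂ hc]; exact hlt₂,
        fun i hi hN => (hgt₁ i hi (by omega)).trans (hgt₂ i hi hN)⟩
    · subst hc
      exact ⟨N₁, hN₁, B.elt_trans _ _ _ _ hlt₁ hlt₂,
        fun i hi hN => (hgt₁ i hi hN).trans (hgt₂ i hi hN)⟩
    · refine ⟨N₁, hN₁, ?_, fun i hi hN => (hgt₁ i hi hN).trans (hgt₂ i hi (by omega))⟩
      rw [← hgt₂ N₁ hN₁ hc]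
      exact hlt₁
  elt_total := by
    intro l f g htgt hne
    classical
    have hab : ns l < ns (l + 1) := hmono (Nat.lt_succ_self l)
    set b := ns (l + 1) - ns l with hb
    have hex : ∃ N, ∃ h : N < b, f.1 ⟨N, h⟩ ≠ g.1 ⟨N, h⟩ := by
      by_contra hco
      push_neg at hco
      exact hne (Subtype.ext (funext fun i => hco i.val i.isLt))
    set P : ℕ → Prop := fun N => ∃ h : N < b, f.1 ⟨N, h⟩ ≠ g.1 ⟨N, h⟩ with hP
    obtain ⟨N₀, hN₀⟩ := hex
    set N := Nat.findGreatest P b with hNdef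
    have hPN : P N := Nat.findGreatest_spec (le_of_lt hN₀.choose) hN₀
    have hafter : ∀ i (hi : i < b), N < i → f.1 ⟨i, hi⟩ = g.1 ⟨i, hi⟩ := by
      intro i hi hNi
      by_contra hcon
      exact Nat.findGreatest_is_greatest hNi (le_of_lt hi) ⟨hi, hcon⟩
    clear_value N
    obtain ⟨hNb, hNne⟩ := hPN
    have htgtN : B.tgt (f.1 ⟨N, hNb⟩) = B.tgt (g.1 ⟨N, hNb⟩) := by
      rcases eq_or_lt_of_le (show N ≤ b - 1 by omega) with h | h
      · -- N is the last index; use equality of targets of the composite edges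
        subst h
        exact B.castV_inj _ htgt
      · have h2 : f.1 ⟨N + 1, by omega⟩ = g.1 ⟨N + 1, by omega⟩ :=
          hafter (N + 1) (by omega) (by omega)
        rw [f.2 N (by omega), g.2 N (by omega), h2]
    rcases B.elt_total _ _ _ htgtN hNne with h | h
    · exact Or.inl ⟨N, hNb, h, hafter⟩
    · exact Or.inr ⟨N, hNb, h, fun i hi hN => (hafter i hi hN).symm⟩

def teleMap (ns : ℕ → ℕ) (hmono : StrictMono ns) (h0 : ns 0 = 0) (x : B.PathSpace) :
    (B.Telescope ns hmono h0).PathSpace :=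
  ⟨fun l => ⟨fun i => x.1 (ns l + i.val), fun i _ => x.2 (ns l + i)⟩, fun l => by
    have hab : ns l < ns (l + 1) := hmono (Nat.lt_succ_self l)
    have hm : ns l + (ns (l + 1) - ns l - 1) + 1 = ns (l + 1) := by omega
    show B.castV _ (B.tgt (x.1 (ns l + (ns (l + 1) - ns l - 1)))) = B.src (x.1 (ns (l + 1) + 0))
    rw [x.2 (ns l + (ns (l + 1) - ns l - 1))]
    exact B.castV_eq_of_heq _ (by rw [hm]; exact HEq.rfl)⟩


/-- Level `n+1` is uniformly ordered: there is a single nonempty block `P` of paths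
from the root to level `n` such that the `n`-basic block at every vertex at level
`n+1` is a positive power of `P`. -/
def UniformlyOrderedLevel (n : ℕ) : Prop :=
  ∃ (p : ℕ) (hp : 0 < p) (P : Fin p → B.FinPath n),
    ∀ v : B.V (n + 1), ∃ (m : ℕ), 0 < m ∧
      ∃ enum : Fin (m * p) ≃ { q : B.FinPath (n + 1) // B.EndsAt q v },
        (∀ i j : Fin (m * p), i < j ↔ B.finLT (enum i).1 (enum j).1) ∧
        (∀ i : Fin (m * p),
          B.truncTo n (Nat.le_succ n) (enum i).1 = P ⟨i.val % p, Nat.mod_lt _ hp⟩)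

/-- The ordinal label of an edge: its position in the linear order on the edges
into its target. -/
noncomputable def edgeLabel {n : ℕ} (e : B.E n) : ℕ := Nat.card { e' : B.E n // B.elt e' e }

/-- Deterministic: for every `n ≥ 1`, distinct edges with the same source at level
`n` have different ordinal labels. -/
def Deterministic : Prop :=
  ∀ n : ℕ, 1 ≤ n → ∀ e f : B.E n, B.src e = B.src f → e ≠ f →
    B.edgeLabel e ≠ B.edgeLabel f

/-!  ### Auxiliary development for the main theorem -/

theorem castV_rfl {n : ℕ} (h : n = n) (v : B.V n) : B.castV h v = v := rfl

theorem castE_rfl {n : ℕ} (h : n = n) (e : B.E n) : B.castE h e = e := rfl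

theorem src_castE {m n : ℕ} (h : m = n) (e : B.E m) :
    B.src (B.castE h e) = B.castV h (B.src e) := by subst h; rfl

theorem castV_pathVert (x : B.PathSpace) {n m : ℕ} (h : n = m) :
    B.castV h (B.pathVert x n) = B.src (x.1 m) := by subst h; rfl

theorem elt_asymm {n : ℕ} {e f : B.E n} (h1 : B.elt e f) (h2 : B.elt f e) : False :=
  B.elt_irrefl n e (B.elt_trans n _ _ _ h1 h2)

theorem pathLT_asymm {z w : B.PathSpace} (h1 : B.pathLT z w) (h2 : B.pathLT w z) : False := by
  obtain ⟨N1, he1, ha1⟩ := h1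
  obtain ⟨N2, he2, ha2⟩ := h2
  rcases lt_trichotomy N1 N2 with h | h | h
  · rw [ha1 N2 h] at he2; exact B.elt_irrefl _ _ he2
  · subst h; exact B.elt_asymm he1 he2
  · rw [ha2 N1 h] at he1; exact B.elt_irrefl _ _ he1

theorem finPath_ext {n : ℕ} {p q : B.FinPath n}
    (h : ∀ (i : ℕ) (hi : i < n), p.1 ⟨i, hi⟩ = q.1 ⟨i, hi⟩) : p = q :=
  Subtype.ext (funext fun i => h i.1 i.2)

theorem pathSpace_ext {x y : B.PathSpace} (h : ∀ i, x.1 i = y.1 i) : x = y :=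
  Subtype.ext (funext h)

theorem finLT_irrefl {n : ℕ} (p : B.FinPath n) : ¬ B.finLT p p := by
  rintro ⟨N, h, he, -⟩
  exact B.elt_irrefl _ _ he

theorem finLT_asymm {n : ℕ} {p q : B.FinPath n} (h1 : B.finLT p q) (h2 : B.finLT q p) :
    False := by
  obtain ⟨N1, hN1, he1, ha1⟩ := h1
  obtain ⟨N2, hN2, he2, ha2⟩ := h2
  rcases lt_trichotomy N1 N2 with h | h | h
  · rw [ha1 N2 hN2 h] at he2; exact B.elt_irrefl _ _ he2
  · subst h; exact B.elt_asymm he1 he2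
  · rw [ha2 N1 hN1 h] at he1; exact B.elt_irrefl _ _ he1

theorem finLT_trans {n : ℕ} {p q r : B.FinPath n} (h1 : B.finLT p q) (h2 : B.finLT q r) :
    B.finLT p r := by
  obtain ⟨N1, hN1, he1, ha1⟩ := h1
  obtain ⟨N2, hN2, he2, ha2⟩ := h2
  rcases lt_trichotomy N1 N2 with h | h | h
  · exact ⟨N2, hN2, by rw [ha1 N2 hN2 h]; exact he2,
      fun i hi hN => (ha1 i hi (by omega)).trans (ha2 i hi hN)⟩
  · subst h
    exact ⟨N1, hN1, B.elt_trans _ _ _ _ he1 he2,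
      fun i hi hN => (ha1 i hi hN).trans (ha2 i hi hN)⟩
  · refine ⟨N1, hN1, ?_, fun i hi hN => (ha1 i hi hN).trans (ha2 i hi (by omega))⟩
    rw [← ha2 N1 hN1 h]
    exact he1

theorem finLT_total {n : ℕ} {v : B.V n} {p q : B.FinPath n}
    (hp : B.EndsAt p v) (hq : B.EndsAt q v) (hne : p ≠ q) :
    B.finLT p q ∨ B.finLT q p := by
  classical
  have hex : ∃ N, ∃ h : N < n, p.1 ⟨N, h⟩ ≠ q.1 ⟨N, h⟩ := by
    by_contra hco
    push_neg at hco
    exact hne (B.finPath_ext fun i hi => hco i hi)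
  set P : ℕ → Prop := fun N => ∃ h : N < n, p.1 ⟨N, h⟩ ≠ q.1 ⟨N, h⟩ with hP
  obtain ⟨N₀, hN₀⟩ := hex
  set N := Nat.findGreatest P n with hNdef
  have hPN : P N := Nat.findGreatest_spec (le_of_lt hN₀.choose) hN₀
  have hafter : ∀ i (hi : i < n), N < i → p.1 ⟨i, hi⟩ = q.1 ⟨i, hi⟩ := by
    intro i hi hNi
    by_contra hcon
    exact Nat.findGreatest_is_greatest hNi (le_of_lt hi) ⟨hi, hcon⟩
  clear_value N
  obtain ⟨hNn, hNne⟩ := hPN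
  have htgt : B.tgt (p.1 ⟨N, hNn⟩) = B.tgt (q.1 ⟨N, hNn⟩) := by
    rcases eq_or_lt_of_le (show N + 1 ≤ n by omega) with h | h
    · have h1 := hp N h.symm
      have h2 := hq N h.symm
      exact h1.trans h2.symm
    · have h2 : p.1 ⟨N + 1, h⟩ = q.1 ⟨N + 1, h⟩ := hafter (N + 1) h (by omega)
      rw [p.2 N h, q.2 N h, h2]
  rcases B.elt_total _ _ _ htgt hNne with h | h
  · exact Or.inl ⟨N, hNn, h, hafter⟩
  · exact Or.inr ⟨N, hNn, h, fun i hi hN => (hafter i hi hN).symm⟩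

/-- There is a finite path from the root into any vertex. -/
theorem exists_finpath_to : ∀ (n : ℕ) (v : B.V n), ∃ p : B.FinPath n, B.EndsAt p v := by
  intro n
  induction n with
  | zero =>
      intro v
      refine ⟨⟨fun i => i.elim0, fun i h => by omega⟩, ?_⟩
      intro m h; omega
  | succ n ih =>
      intro v
      obtain ⟨e, he⟩ := B.hasIn n v
      obtain ⟨p, hp⟩ := ih (B.src e)
      refine ⟨⟨fun j => if h : j.val < n then p.1 ⟨j.val, h⟩ else
        B.castE (by omega : n = j.val) e, ?_⟩, ?_⟩
      · intro i h
        beta_reduce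
        by_cases h1 : i + 1 < n
        · rw [dif_pos (by omega : i < n), dif_pos h1]
          exact p.2 i h1
        · have h2 : i + 1 = n := by omega
          subst h2
          rw [dif_pos (by omega : i < i + 1), dif_neg (by omega : ¬ i + 1 < i + 1)]
          have h3 := hp i rfl
          rw [h3, B.castE_rfl, B.castV_rfl]
      · intro m h
        have hm : m = n := by omega
        subst hm
        show B.tgt (if h : m < m then p.1 ⟨m, h⟩ else B.castE (by omega : m = m) e)
          = B.castV h v
        rw [dif_neg (by omega : ¬ m < m)]
        rw [B.castE_rfl, B.castV_rfl, he]

/-- Replace the initial segment of an infinite path below level `n`. -/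
def glue (x : B.PathSpace) (n : ℕ) (p : B.FinPath n) (hp : B.EndsAt p (B.pathVert x n)) :
    B.PathSpace :=
  ⟨fun i => if h : i < n then p.1 ⟨i, h⟩ else x.1 i, by
    intro i
    beta_reduce
    by_cases h1 : i + 1 < n
    · rw [dif_pos (by omega : i < n), dif_pos h1]
      exact p.2 i h1
    · by_cases h2 : i + 1 = n
      · rw [dif_pos (by omega : i < n), dif_neg (by omega : ¬ i + 1 < n)]
        exact (hp i h2.symm).trans (B.castV_pathVert x h2.symm)
      · rw [dif_neg (by omega : ¬ i < n), dif_neg (by omega : ¬ i + 1 < n)]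
        exact x.2 i⟩

theorem glue_coord_lt (x : B.PathSpace) (n : ℕ) (p : B.FinPath n)
    (hp : B.EndsAt p (B.pathVert x n)) {i : ℕ} (h : i < n) :
    (B.glue x n p hp).1 i = p.1 ⟨i, h⟩ := dif_pos h

theorem glue_coord_ge (x : B.PathSpace) (n : ℕ) (p : B.FinPath n)
    (hp : B.EndsAt p (B.pathVert x n)) {i : ℕ} (h : n ≤ i) :
    (B.glue x n p hp).1 i = x.1 i := dif_neg (not_lt.mpr h)

theorem glue_init (x : B.PathSpace) (n : ℕ) (p : B.FinPath n)
    (hp : B.EndsAt p (B.pathVert x n)) :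
    B.pathInit (B.glue x n p hp) n = p :=
  B.finPath_ext fun i hi => B.glue_coord_lt x n p hp hi

/-- Modify a finite path at one coordinate (and arbitrarily below). -/
def spliceFin {n : ℕ} (p : B.FinPath n) (i : ℕ) (hi : i < n) (e : B.E i)
    (hte : B.tgt e = B.tgt (p.1 ⟨i, hi⟩)) (r : B.FinPath i) (hr : B.EndsAt r (B.src e)) :
    B.FinPath n :=
  ⟨fun j => if h : j.val < i then r.1 ⟨j.val, h⟩ else
      if h' : j.val = i then B.castE h'.symm e else p.1 j, by
    intro j hj
    beta_reduce
    by_cases h1 : j + 1 < i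
    · rw [dif_pos (by omega : j < i), dif_pos h1]
      exact r.2 j h1
    · by_cases h2 : j + 1 = i
      · subst h2
        rw [dif_pos (by omega : j < j + 1), dif_neg (by omega : ¬ j + 1 < j + 1),
          dif_pos rfl]
        have h3 := hr j rfl
        rw [h3, B.castE_rfl, B.castV_rfl]
      · by_cases h3 : j = i
        · subst h3
          rw [dif_neg (by omega : ¬ j < j), dif_pos rfl,
            dif_neg (by omega : ¬ j + 1 < j), dif_neg (by omega : ¬ j + 1 = j),
            B.castE_rfl, hte]
          exact p.2 j hj
        · rw [dif_neg (by omega : ¬ j < i), dif_neg (by omega : ¬ j = i),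
            dif_neg (by omega : ¬ j + 1 < i), dif_neg (by omega : ¬ j + 1 = i)]
          exact p.2 j hj⟩

theorem spliceFin_coord_gt {n : ℕ} (p : B.FinPath n) (i : ℕ) (hi : i < n) (e : B.E i)
    (hte : B.tgt e = B.tgt (p.1 ⟨i, hi⟩)) (r : B.FinPath i) (hr : B.EndsAt r (B.src e))
    {j : ℕ} (hj : j < n) (hij : i < j) :
    (B.spliceFin p i hi e hte r hr).1 ⟨j, hj⟩ = p.1 ⟨j, hj⟩ := by
  show (if h : j < i then _ else if h' : j = i then _ else _) = _
  rw [dif_neg (by omega : ¬ j < i), dif_neg (by omega : ¬ j = i)]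

theorem spliceFin_coord_eq {n : ℕ} (p : B.FinPath n) (i : ℕ) (hi : i < n) (e : B.E i)
    (hte : B.tgt e = B.tgt (p.1 ⟨i, hi⟩)) (r : B.FinPath i) (hr : B.EndsAt r (B.src e)) :
    (B.spliceFin p i hi e hte r hr).1 ⟨i, hi⟩ = e := by
  show (if h : i < i then _ else if h' : i = i then _ else _) = _
  rw [dif_neg (by omega : ¬ i < i), dif_pos rfl, B.castE_rfl]

theorem spliceFin_endsAt {n : ℕ} {v : B.V n} (p : B.FinPath n) (i : ℕ) (hi : i < n)
    (e : B.E i) (hte : B.tgt e = B.tgt (p.1 ⟨i, hi⟩)) (r : B.FinPath i)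
    (hr : B.EndsAt r (B.src e)) (hp : B.EndsAt p v) :
    B.EndsAt (B.spliceFin p i hi e hte r hr) v := by
  intro m h
  subst h
  rcases eq_or_lt_of_le (show i ≤ m by omega) with h1 | h1
  · subst h1
    rw [B.spliceFin_coord_eq, hte]
    exact hp i rfl
  · rw [B.spliceFin_coord_gt p i hi e hte r hr (by omega) h1]
    exact hp m rfl

theorem spliceFin_finLT {n : ℕ} (p : B.FinPath n) (i : ℕ) (hi : i < n) (e : B.E i)
    (hte : B.tgt e = B.tgt (p.1 ⟨i, hi⟩)) (r : B.FinPath i) (hr : B.EndsAt r (B.src e))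
    (helt : B.elt e (p.1 ⟨i, hi⟩)) :
    B.finLT (B.spliceFin p i hi e hte r hr) p := by
  refine ⟨i, hi, ?_, ?_⟩
  · rw [B.spliceFin_coord_eq]; exact helt
  · intro j hj hij
    exact B.spliceFin_coord_gt p i hi e hte r hr hj hij


/-!  ### The fiber of finite paths into a vertex, as a finite linear order -/

/-- The set of finite paths from the root into the vertex `v` at level `n`. -/
abbrev Fiber (n : ℕ) (v : B.V n) : Type := {p : B.FinPath n // B.EndsAt p v}

noncomputable instance fiberLinearOrder (n : ℕ) (v : B.V n) : LinearOrder (B.Fiber n v) where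
  le p q := p = q ∨ B.finLT p.1 q.1
  lt p q := B.finLT p.1 q.1
  le_refl p := Or.inl rfl
  le_trans p q r hpq hqr := by
    rcases hpq with rfl | h1
    · exact hqr
    · rcases hqr with rfl | h2
      · exact Or.inr h1
      · exact Or.inr (B.finLT_trans h1 h2)
  lt_iff_le_not_ge p q := by
    constructor
    · intro h
      refine ⟨Or.inr h, ?_⟩
      rintro (rfl | h2)
      · exact B.finLT_irrefl _ h
      · exact B.finLT_asymm h h2
    · rintro ⟨rfl | h1, h2⟩
      · exact absurd (Or.inl rfl) h2
      · exact h1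
  le_antisymm p q hpq hqp := by
    rcases hpq with rfl | h1
    · rfl
    · rcases hqp with rfl | h2
      · rfl
      · exact absurd (B.finLT_asymm h1 h2) not_false
  le_total p q := by
    by_cases h : p = q
    · exact Or.inl (Or.inl h)
    · rcases B.finLT_total p.2 q.2 (fun hc : p.1 = q.1 => h (Subtype.ext hc)) with h1 | h1
      · exact Or.inl (Or.inr h1)
      · exact Or.inr (Or.inr h1)
  toDecidableLE p q := Classical.propDecidable _

theorem fiber_lt_def {n : ℕ} {v : B.V n} (p q : B.Fiber n v) :
    p < q ↔ B.finLT p.1 q.1 := Iff.rfl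

noncomputable instance fiberFintype (n : ℕ) (v : B.V n) : Fintype (B.Fiber n v) := by
  classical
  letI : ∀ m, Fintype (B.E m) := B.fintE
  unfold Fiber FinPath
  infer_instance

noncomputable instance fiberLocFin (n : ℕ) (v : B.V n) :
    LocallyFiniteOrder (B.Fiber n v) := Fintype.toLocallyFiniteOrder

/-- In a finite linear order, the interval `(p, q]` splits off its least element. -/
theorem exists_succ_Ioc {α : Type} [LinearOrder α] [LocallyFiniteOrder α] {p q : α}
    (h : p < q) :
    ∃ s, p < s ∧ s ≤ q ∧ (∀ t, p < t → ¬ t < s) ∧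
      (Finset.Ioc p q).card = (Finset.Ioc s q).card + 1 := by
  have hq : q ∈ Finset.Ioc p q := Finset.mem_Ioc.mpr ⟨h, le_rfl⟩
  have hne : (Finset.Ioc p q).Nonempty := ⟨q, hq⟩
  set s := (Finset.Ioc p q).min' hne with hs
  have hsmem := Finset.min'_mem _ hne
  rw [Finset.mem_Ioc] at hsmem
  refine ⟨s, hsmem.1, hsmem.2, ?_, ?_⟩
  · intro t hpt hts
    have ht : t ∈ Finset.Ioc p q :=
      Finset.mem_Ioc.mpr ⟨hpt, le_of_lt (lt_of_lt_of_le hts hsmem.2)⟩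
    exact absurd (Finset.min'_le _ _ ht) (not_le.mpr hts)
  · have hins : Finset.Ioc p q = insert s (Finset.Ioc s q) := by
      ext t
      simp only [Finset.mem_Ioc, Finset.mem_insert]
      constructor
      · rintro ⟨h1, h2⟩
        rcases eq_or_ne t s with rfl | hts
        · exact Or.inl rfl
        · exact Or.inr ⟨lt_of_le_of_ne
            (Finset.min'_le _ _ (Finset.mem_Ioc.mpr ⟨h1, h2⟩)) (Ne.symm hts), h2⟩
      · rintro (rfl | ⟨h1, h2⟩)
        · exact ⟨hsmem.1, hsmem.2⟩
        · exact ⟨lt_trans hsmem.1 h1, h2⟩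
    rw [hins, Finset.card_insert_of_notMem (by simp [Finset.mem_Ioc])]

/-!  ### The Vershik map moves one step in the fiber -/

theorem succ_step (T : B.PathSpace ≃ B.PathSpace) (hV : B.IsVershik T) (x : B.PathSpace)
    (n : ℕ) (q : B.FinPath n) (hq : B.EndsAt q (B.pathVert x n))
    (hlt : B.finLT (B.pathInit x n) q)
    (hleast : ∀ t : B.FinPath n, B.EndsAt t (B.pathVert x n) →
      B.finLT (B.pathInit x n) t → ¬ B.finLT t q) :
    T x = B.glue x n q hq := by
  obtain ⟨N, hNn, heN, haN⟩ := hlt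
  have hxz : B.pathLT x (B.glue x n q hq) := by
    refine ⟨N, ?_, ?_⟩
    · rw [B.glue_coord_lt x n q hq hNn]; exact heN
    · intro i hi
      by_cases h : i < n
      · rw [B.glue_coord_lt x n q hq h]; exact haN i h hi
      · rw [B.glue_coord_ge x n q hq (by omega)]
  have hnm : ¬ B.IsMaxPath x := fun hmax => hmax N _ heN
  obtain ⟨hxT, hminT⟩ := hV.1 x hnm
  have hnz := hminT _ hxz
  obtain ⟨M, heM, haM⟩ := hxT
  have hMn : M < n := by
    by_contra hMn
    push_neg at hMn
    apply hnz
    refine ⟨M, ?_, ?_⟩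
    · rw [B.glue_coord_ge x n q hq hMn]; exact heM
    · intro i hi
      rw [B.glue_coord_ge x n q hq (by omega)]
      exact haM i hi
  have htail : ∀ i, n ≤ i → (T x).1 i = x.1 i := fun i hi => (haM i (by omega)).symm
  have hvert : B.pathVert (T x) n = B.pathVert x n := by
    show B.src ((T x).1 n) = B.src (x.1 n)
    rw [htail n le_rfl]
  have hrends : B.EndsAt (B.pathInit (T x) n) (B.pathVert x n) :=
    hvert ▸ B.pathInit_endsAt (T x) n
  have hrlt : B.finLT (B.pathInit x n) (B.pathInit (T x) n) := by
    refine ⟨M, hMn, heM, ?_⟩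
    intro i hi hMi
    exact haM i hMi
  have hqr : ¬ B.finLT q (B.pathInit (T x) n) := by
    intro hqr
    obtain ⟨N', hN', he', ha'⟩ := hqr
    apply hnz
    refine ⟨N', ?_, ?_⟩
    · rw [B.glue_coord_lt x n q hq hN']; exact he'
    · intro i hi
      by_cases h : i < n
      · rw [B.glue_coord_lt x n q hq h]; exact ha' i h hi
      · rw [B.glue_coord_ge x n q hq (by omega)]
        exact (htail i (by omega)).symm
  have hrq : ¬ B.finLT (B.pathInit (T x) n) q := hleast _ hrends hrlt
  have hrqe : B.pathInit (T x) n = q := by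
    by_contra hne
    rcases B.finLT_total hrends hq hne with h | h
    · exact hrq h
    · exact hqr h
  apply B.pathSpace_ext
  intro i
  by_cases h : i < n
  · rw [B.glue_coord_lt x n q hq h, ← hrqe]
    rfl
  · rw [B.glue_coord_ge x n q hq (by omega)]
    exact htail i (by omega)

theorem iter_glue (T : B.PathSpace ≃ B.PathSpace) (hV : B.IsVershik T) (x : B.PathSpace)
    (n : ℕ) :
    ∀ (c : ℕ) (y : B.PathSpace), (∀ i, n ≤ i → y.1 i = x.1 i) →
      ∀ (py px : B.Fiber n (B.pathVert x n)),
      py.1 = B.pathInit y n → px.1 = B.pathInit x n → py ≤ px →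
      (Finset.Ioc py px).card = c → (⇑T)^[c] y = x := by
  intro c
  induction c with
  | zero =>
      intro y hy py px hpy hpx hle hcard
      have hnlt : ¬ py < px := by
        intro hlt
        have hmem : px ∈ Finset.Ioc py px := Finset.mem_Ioc.mpr ⟨hlt, le_rfl⟩
        have := Finset.card_pos.mpr ⟨px, hmem⟩
        omega
      have hpe : py = px := le_antisymm hle (not_lt.mp hnlt)
      show y = x
      apply B.pathSpace_ext
      intro i
      by_cases h : i < n
      · calc y.1 i = (B.pathInit y n).1 ⟨i, h⟩ := rfl
          _ = py.1.1 ⟨i, h⟩ := by rw [hpy]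
          _ = px.1.1 ⟨i, h⟩ := by rw [hpe]
          _ = (B.pathInit x n).1 ⟨i, h⟩ := by rw [hpx]
          _ = x.1 i := rfl
      · exact hy i (by omega)
  | succ c ih =>
      intro y hy py px hpy hpx hle hcard
      have hlt : py < px := by
        rcases lt_or_eq_of_le hle with h | h
        · exact h
        · rw [h, Finset.Ioc_self, Finset.card_empty] at hcard
          omega
      obtain ⟨s, hps, hsx, hsleast, hcard'⟩ := exists_succ_Ioc hlt
      have hvy : B.pathVert y n = B.pathVert x n := by
        show B.src (y.1 n) = B.src (x.1 n)
        rw [hy n le_rfl]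
      have hsends : B.EndsAt s.1 (B.pathVert y n) := by rw [hvy]; exact s.2
      have hTy : T y = B.glue y n s.1 hsends := by
        apply B.succ_step T hV y n s.1 hsends
        · have h1 : B.finLT py.1 s.1 := (B.fiber_lt_def py s).mp hps
          rw [hpy] at h1
          exact h1
        · intro t ht hlt' hts
          have ht' : B.EndsAt t (B.pathVert x n) := by rw [← hvy]; exact ht
          have : py < ⟨t, ht'⟩ := by
            rw [B.fiber_lt_def, hpy]
            exact hlt'
          exact hsleast ⟨t, ht'⟩ this hts
      have hy' : ∀ i, n ≤ i → (T y).1 i = x.1 i := by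
        intro i hi
        rw [hTy, B.glue_coord_ge y n s.1 hsends hi]
        exact hy i hi
      have hpy' : s.1 = B.pathInit (T y) n := by
        rw [hTy, B.glue_init]
      have hcard'' : (Finset.Ioc s px).card = c := by
        rw [hcard] at hcard'
        omega
      have := ih (T y) hy' s px hpy' hpx hsx hcard''
      rw [Function.iterate_succ_apply]
      exact this

theorem fiber_min_edges (n : ℕ) (v : B.V n) (p : B.Fiber n v)
    (hp : ∀ t : B.Fiber n v, ¬ t < p) (i : ℕ) (hi : i < n) :
    B.IsMinEdge (p.1.1 ⟨i, hi⟩) := by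
  intro e' he'
  have hte : B.tgt e' = B.tgt (p.1.1 ⟨i, hi⟩) := B.elt_tgt i _ _ he'
  obtain ⟨r, hr⟩ := B.exists_finpath_to i (B.src e')
  have hend := B.spliceFin_endsAt p.1 i hi e' hte r hr p.2
  exact hp ⟨_, hend⟩ ((B.fiber_lt_def _ _).mpr (B.spliceFin_finLT p.1 i hi e' hte r hr he'))


/-!  ### Splicing an infinite path at one coordinate -/

def splicePath (x : B.PathSpace) (i : ℕ) (e : B.E i) (hte : B.tgt e = B.tgt (x.1 i))
    (r : B.FinPath i) (hr : B.EndsAt r (B.src e)) : B.PathSpace :=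
  ⟨fun j => if h : j < i then r.1 ⟨j, h⟩ else if h' : j = i then B.castE h'.symm e else x.1 j, by
    intro j
    beta_reduce
    by_cases h1 : j + 1 < i
    · rw [dif_pos (by omega : j < i), dif_pos h1]
      exact r.2 j h1
    · by_cases h2 : j + 1 = i
      · subst h2
        rw [dif_pos (by omega : j < j + 1), dif_neg (by omega : ¬ j + 1 < j + 1),
          dif_pos rfl]
        rw [hr j rfl, B.castE_rfl, B.castV_rfl]
      · by_cases h3 : j = i
        · subst h3
          rw [dif_neg (by omega : ¬ j < j), dif_pos rfl, dif_neg (by omega : ¬ j + 1 < j),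
            dif_neg (by omega : ¬ j + 1 = j), B.castE_rfl, hte]
          exact x.2 j
        · rw [dif_neg (by omega : ¬ j < i), dif_neg h3, dif_neg (by omega : ¬ j + 1 < i),
            dif_neg (by omega : ¬ j + 1 = i)]
          exact x.2 j⟩

theorem splicePath_coord_gt (x : B.PathSpace) (i : ℕ) (e : B.E i)
    (hte : B.tgt e = B.tgt (x.1 i)) (r : B.FinPath i) (hr : B.EndsAt r (B.src e))
    {j : ℕ} (hij : i < j) :
    (B.splicePath x i e hte r hr).1 j = x.1 j := by
  show (if h : j < i then _ else if h' : j = i then _ else x.1 j) = x.1 j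
  rw [dif_neg (by omega : ¬ j < i), dif_neg (by omega : ¬ j = i)]

theorem splicePath_coord_eq (x : B.PathSpace) (i : ℕ) (e : B.E i)
    (hte : B.tgt e = B.tgt (x.1 i)) (r : B.FinPath i) (hr : B.EndsAt r (B.src e)) :
    (B.splicePath x i e hte r hr).1 i = e := by
  show (if h : i < i then _ else if h' : i = i then B.castE _ e else _) = e
  rw [dif_neg (by omega : ¬ i < i), dif_pos rfl, B.castE_rfl]

/-!  ### Structure of one Vershik step -/

theorem vershik_step_structure (T : B.PathSpace ≃ B.PathSpace) (hV : B.IsVershik T)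
    (b : B.PathSpace) (j : ℕ) (hmax : ∀ i, i < j → B.IsMaxEdge (b.1 i))
    (hj : ¬ B.IsMaxEdge (b.1 j)) :
    (∀ i, j < i → (T b).1 i = b.1 i) ∧ B.elt (b.1 j) ((T b).1 j) ∧
    (∀ e, B.elt (b.1 j) e → ¬ B.elt e ((T b).1 j)) ∧
    (∀ i, i < j → B.IsMinEdge ((T b).1 i)) := by
  have hcand : ∀ e : B.E j, B.tgt e = B.tgt (b.1 j) →
      ∃ z : B.PathSpace, z.1 j = e ∧ ∀ i, j < i → z.1 i = b.1 i := by
    intro e hte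
    obtain ⟨r, hr⟩ := B.exists_finpath_to j (B.src e)
    exact ⟨B.splicePath b j e hte r hr, B.splicePath_coord_eq b j e hte r hr,
      fun i hi => B.splicePath_coord_gt b j e hte r hr hi⟩
  have hnm : ¬ B.IsMaxPath b := fun h => hj (h j)
  obtain ⟨hbT, hminT⟩ := hV.1 b hnm
  obtain ⟨M, heM, haM⟩ := hbT
  have hjM : j ≤ M := by
    by_contra h
    push_neg at h
    exact hmax M h _ heM
  have hMj : M = j := by
    by_contra hne
    have hjMlt : j < M := by omega
    obtain ⟨e, he⟩ : ∃ e, B.elt (b.1 j) e := by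
      by_contra hcon
      push_neg at hcon
      exact hj hcon
    obtain ⟨z, hz1, hz2⟩ := hcand e (B.elt_tgt _ _ _ he).symm
    have hbz : B.pathLT b z := ⟨j, by rw [hz1]; exact he, fun i hi => (hz2 i hi).symm⟩
    apply hminT z hbz
    refine ⟨M, ?_, ?_⟩
    · rw [hz2 M hjMlt]; exact heM
    · intro i hi
      rw [hz2 i (by omega)]
      exact haM i hi
  subst hMj
  refine ⟨fun i hi => (haM i hi).symm, heM, ?_, ?_⟩
  · intro e hbe heT
    obtain ⟨z, hz1, hz2⟩ := hcand e (B.elt_tgt _ _ _ hbe).symm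
    have hbz : B.pathLT b z := ⟨M, by rw [hz1]; exact hbe, fun i hi => (hz2 i hi).symm⟩
    apply hminT z hbz
    refine ⟨M, ?_, ?_⟩
    · rw [hz1]; exact heT
    · intro i hi
      rw [hz2 i hi]
      exact haM i hi
  · intro i hij e' he'
    have hte' : B.tgt e' = B.tgt ((T b).1 i) := B.elt_tgt _ _ _ he'
    obtain ⟨r', hr'⟩ := B.exists_finpath_to i (B.src e')
    have hbw : B.pathLT b (B.splicePath (T b) i e' hte' r' hr') := by
      refine ⟨M, ?_, ?_⟩
      · rw [B.splicePath_coord_gt (T b) i e' hte' r' hr' hij]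
        exact heM
      · intro i' hi'
        rw [B.splicePath_coord_gt (T b) i e' hte' r' hr' (by omega)]
        exact (haM i' hi').symm ▸ rfl
    apply hminT _ hbw
    refine ⟨i, ?_, ?_⟩
    · rw [B.splicePath_coord_eq]
      exact he'
    · intro i' hi'
      exact B.splicePath_coord_gt (T b) i e' hte' r' hr' hi'

/-!  ### Cuts from `k`-equivalence at a level -/

theorem iterZ_neg_eq (T : B.PathSpace ≃ B.PathSpace) (c : ℕ) (y w : B.PathSpace)
    (h : (⇑T)^[c] w = y) : B.iterZ T (-(c : ℤ)) y = w := by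
  show ((T : Equiv.Perm B.PathSpace) ^ (-(c : ℤ))) y = w
  rw [zpow_neg, zpow_natCast, Equiv.Perm.inv_eq_iff_eq, Equiv.Perm.coe_pow]
  exact h.symm

theorem cut_of_kequivAt (T : B.PathSpace ≃ B.PathSpace) (hV : B.IsVershik T)
    (x x' : B.PathSpace) (k n : ℕ) (hke : B.KEquivAt k n x x') :
    ∃ m : ℤ, (∀ i, i < n → B.IsMinEdge ((B.iterZ T m x).1 i)) ∧
      (∀ i, i < n → B.IsMinEdge ((B.iterZ T m x').1 i)) := by
  obtain ⟨φ, hord, -, hdot⟩ := hke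
  have hφlt : ∀ p q : B.Fiber n (B.pathVert x n), p < q ↔ φ p < φ q :=
    fun p q => hord p q
  have hφle : ∀ p q : B.Fiber n (B.pathVert x n), p ≤ q ↔ φ p ≤ φ q := by
    intro p q
    rw [← not_lt, ← not_lt, not_iff_not]
    exact hφlt q p
  have hne : (Finset.univ : Finset (B.Fiber n (B.pathVert x n))).Nonempty :=
    ⟨⟨B.pathInit x n, B.pathInit_endsAt x n⟩, Finset.mem_univ _⟩
  have hne' : (Finset.univ : Finset (B.Fiber n (B.pathVert x' n))).Nonempty :=
    ⟨⟨B.pathInit x' n, B.pathInit_endsAt x' n⟩, Finset.mem_univ _⟩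
  obtain ⟨p0, hmin⟩ : ∃ p0 : B.Fiber n (B.pathVert x n), ∀ t, ¬ t < p0 :=
    ⟨Finset.univ.min' hne, fun t ht =>
      absurd (Finset.min'_le _ t (Finset.mem_univ t)) (not_le.mpr ht)⟩
  obtain ⟨p0', hmin'⟩ : ∃ p0' : B.Fiber n (B.pathVert x' n), ∀ t, ¬ t < p0' :=
    ⟨Finset.univ.min' hne', fun t ht =>
      absurd (Finset.min'_le _ t (Finset.mem_univ t)) (not_le.mpr ht)⟩
  have hφp0 : φ p0 = p0' := by
    have h1 : ∀ t', ¬ t' < φ p0 := by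
      intro t' ht'
      apply hmin (φ.symm t')
      rw [hφlt (φ.symm t') p0]
      simpa using ht'
    exact le_antisymm (not_lt.mp (h1 p0')) (not_lt.mp (hmin' (φ p0)))
  have hle0 : p0 ≤ ⟨B.pathInit x n, B.pathInit_endsAt x n⟩ := not_lt.mp (hmin _)
  have hle0' : p0' ≤ ⟨B.pathInit x' n, B.pathInit_endsAt x' n⟩ := not_lt.mp (hmin' _)
  have hcards : (Finset.Ioc p0' ⟨B.pathInit x' n, B.pathInit_endsAt x' n⟩).card =
      (Finset.Ioc p0 ⟨B.pathInit x n, B.pathInit_endsAt x n⟩).card := by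
    refine (Finset.card_nbij' (⇑φ) (⇑φ.symm) ?_ ?_ ?_ ?_).symm
    · intro a ha
      rw [Finset.mem_coe, Finset.mem_Ioc] at ha ⊢
      rw [← hφp0, ← hdot, ← hφlt, ← hφle]
      exact ha
    · intro a ha
      rw [Finset.mem_coe, Finset.mem_Ioc] at ha ⊢
      rw [hφlt p0 (φ.symm a), hφle (φ.symm a), φ.apply_symm_apply, hφp0, hdot]
      exact ha
    · intro a _; exact φ.symm_apply_apply a
    · intro a _; exact φ.apply_symm_apply a
  have hw := B.iter_glue T hV x n
    (Finset.Ioc p0 ⟨B.pathInit x n, B.pathInit_endsAt x n⟩).card (B.glue x n p0.1 p0.2)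
    (fun i hi => B.glue_coord_ge x n p0.1 p0.2 hi) p0 _
    (B.glue_init x n p0.1 p0.2).symm rfl hle0 rfl
  have hw' := B.iter_glue T hV x' n
    (Finset.Ioc p0 ⟨B.pathInit x n, B.pathInit_endsAt x n⟩).card (B.glue x' n p0'.1 p0'.2)
    (fun i hi => B.glue_coord_ge x' n p0'.1 p0'.2 hi) p0' _
    (B.glue_init x' n p0'.1 p0'.2).symm rfl hle0' hcards
  refine ⟨-((Finset.Ioc p0 ⟨B.pathInit x n, B.pathInit_endsAt x n⟩).card : ℤ), ?_, ?_⟩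
  · intro i hi
    have hx := B.iterZ_neg_eq T _ x _ hw
    rw [hx, B.glue_coord_lt x n p0.1 p0.2 hi]
    exact B.fiber_min_edges n _ p0 hmin i hi
  · intro i hi
    have hx := B.iterZ_neg_eq T _ x' _ hw'
    rw [hx, B.glue_coord_lt x' n p0'.1 p0'.2 hi]
    exact B.fiber_min_edges n _ p0' hmin' i hi


/-!  ### Elementary facts about integer iterates -/

theorem iterZ_zero (T : B.PathSpace ≃ B.PathSpace) (x : B.PathSpace) :
    B.iterZ T 0 x = x := by
  show ((T : Equiv.Perm B.PathSpace) ^ (0 : ℤ)) x = x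
  rw [zpow_zero]
  rfl

theorem iterZ_succ (T : B.PathSpace ≃ B.PathSpace) (m : ℤ) (x : B.PathSpace) :
    B.iterZ T (m + 1) x = B.iterZ T m (T x) := by
  show ((T : Equiv.Perm B.PathSpace) ^ (m + 1)) x = ((T : Equiv.Perm B.PathSpace) ^ m) (T x)
  rw [zpow_add_one, Equiv.Perm.mul_apply]

theorem iterZ_pred (T : B.PathSpace ≃ B.PathSpace) (m : ℤ) (x : B.PathSpace) :
    B.iterZ T (m - 1) x = B.iterZ T m (T.symm x) := by
  show ((T : Equiv.Perm B.PathSpace) ^ (m - 1)) x = ((T : Equiv.Perm B.PathSpace) ^ m) (T.symm x)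
  rw [zpow_sub_one, Equiv.Perm.mul_apply, Equiv.Perm.inv_def]

/-!  ### Odometer lemmas -/

theorem odo_min_edge_unique (hsub : ∀ n, Subsingleton (B.V n)) {i : ℕ} {e f : B.E i}
    (he : B.IsMinEdge e) (hf : B.IsMinEdge f) : e = f := by
  by_contra hne
  have htgt : B.tgt e = B.tgt f := @Subsingleton.elim _ (hsub (i + 1)) _ _
  rcases B.elt_total i e f htgt hne with h | h
  · exact hf e h
  · exact he f h

/-- If all edges of `b` below `ℓ` are maximal, all edges of `T b` below `ℓ` are
minimal. -/
theorem allmax_step_min (T : B.PathSpace ≃ B.PathSpace) (hV : B.IsVershik T) (ℓ : ℕ)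
    (b : B.PathSpace) (hb : ∀ i, i < ℓ → B.IsMaxEdge (b.1 i)) :
    ∀ i, i < ℓ → B.IsMinEdge ((T b).1 i) := by
  classical
  by_cases hmb : B.IsMaxPath b
  · intro i _
    exact hV.2 b hmb i
  · have hPex : ∃ j, ¬ B.IsMaxEdge (b.1 j) := by
      by_contra hcon
      push_neg at hcon
      exact hmb hcon
    have hjnm := Nat.find_spec hPex
    have hjmax : ∀ i, i < Nat.find hPex → B.IsMaxEdge (b.1 i) := fun i hi =>
      not_not.mp (Nat.find_min hPex hi)
    obtain ⟨-, -, -, h4⟩ := B.vershik_step_structure T hV b (Nat.find hPex) hjmax hjnm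
    intro i hiℓ
    apply h4
    have hℓj : ℓ ≤ Nat.find hPex := by
      by_contra hcon
      push_neg at hcon
      exact hjnm (hb _ hcon)
    omega

theorem odo_step_agree (hsub : ∀ n, Subsingleton (B.V n)) (T : B.PathSpace ≃ B.PathSpace)
    (hV : B.IsVershik T) (ℓ : ℕ) (b c : B.PathSpace)
    (h : ∀ i, i < ℓ → b.1 i = c.1 i) : ∀ i, i < ℓ → (T b).1 i = (T c).1 i := by
  classical
  by_cases hb : ∃ j, j < ℓ ∧ ¬ B.IsMaxEdge (b.1 j)
  · obtain ⟨j0, hj0ℓ, hj0⟩ := hb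
    have hPex : ∃ j, ¬ B.IsMaxEdge (b.1 j) := ⟨j0, hj0⟩
    set j := Nat.find hPex with hjdef
    have hjlt : j < ℓ := lt_of_le_of_lt (Nat.find_min' hPex hj0) hj0ℓ
    have hjnm : ¬ B.IsMaxEdge (b.1 j) := Nat.find_spec hPex
    have hjmax : ∀ i, i < j → B.IsMaxEdge (b.1 i) := fun i hi =>
      not_not.mp (Nat.find_min hPex hi)
    obtain ⟨ha1, ha2, ha3, ha4⟩ := B.vershik_step_structure T hV b j hjmax hjnm
    have hjnm' : ¬ B.IsMaxEdge (c.1 j) := by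
      rw [← h _ hjlt]; exact hjnm
    have hjmax' : ∀ i, i < j → B.IsMaxEdge (c.1 i) := fun i hi => by
      rw [← h i (by omega)]; exact hjmax i hi
    obtain ⟨hb1, hb2, hb3, hb4⟩ := B.vershik_step_structure T hV c j hjmax' hjnm'
    intro i hiℓ
    rcases lt_trichotomy i j with hij | hij | hij
    · exact B.odo_min_edge_unique hsub (ha4 i hij) (hb4 i hij)
    · subst hij
      by_contra hne
      have htgt : B.tgt ((T b).1 j) = B.tgt ((T c).1 j) :=
        @Subsingleton.elim _ (hsub (j + 1)) _ _
      have hcb : B.elt (c.1 j) ((T b).1 j) := by rw [← h j hiℓ]; exact ha2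
      rcases B.elt_total j _ _ htgt hne with h1 | h1
      · exact hb3 _ hcb h1
      · have hbc : B.elt (b.1 j) ((T c).1 j) := by rw [h j hiℓ]; exact hb2
        exact ha3 _ hbc h1
    · rw [ha1 i hij, hb1 i hij]
      exact h i hiℓ
  · push_neg at hb
    have hbmax : ∀ i, i < ℓ → B.IsMaxEdge (b.1 i) := hb
    have hcmax : ∀ i, i < ℓ → B.IsMaxEdge (c.1 i) := fun i hi => by
      rw [← h i hi]; exact hbmax i hi
    intro i hi
    exact B.odo_min_edge_unique hsub
      (B.allmax_step_min T hV ℓ b hbmax i hi) (B.allmax_step_min T hV ℓ c hcmax i hi)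

theorem odo_back_agree (hsub : ∀ n, Subsingleton (B.V n)) (T : B.PathSpace ≃ B.PathSpace)
    (hV : B.IsVershik T) (ℓ : ℕ) (b c : B.PathSpace)
    (h : ∀ i, i < ℓ → (T b).1 i = (T c).1 i) : ∀ i, i < ℓ → b.1 i = c.1 i := by
  classical
  haveI : ∀ i : Fin ℓ, Finite (B.E i.val) := fun i => @Finite.of_fintype _ (B.fintE i.val)
  set F : B.PathSpace → (∀ i : Fin ℓ, B.E i.val) := fun b i => b.1 i.val with hF
  have hFiff : ∀ b c : B.PathSpace, F b = F c ↔ ∀ i, i < ℓ → b.1 i = c.1 i := by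
    intro b c
    constructor
    · intro hfc i hi
      exact congrFun hfc ⟨i, hi⟩
    · intro hbc
      funext i
      exact hbc i.val i.isLt
  have hfwd : ∀ b c, F b = F c → F (T b) = F (T c) := fun b c hbc =>
    (hFiff _ _).mpr (B.odo_step_agree hsub T hV ℓ b c ((hFiff _ _).mp hbc))
  set G : Set.range F → Set.range F :=
    fun a => ⟨F (T (Classical.choose a.2)), Set.mem_range_self _⟩ with hG
  have hGF : ∀ b : B.PathSpace,
      G ⟨F b, Set.mem_range_self b⟩ = ⟨F (T b), Set.mem_range_self (T b)⟩ := by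
    intro b
    apply Subtype.ext
    show F (T (Classical.choose _)) = F (T b)
    apply hfwd
    exact Classical.choose_spec (Set.mem_range_self (f := F) b)
  have hGsurj : Function.Surjective G := by
    rintro ⟨a, ha⟩
    obtain ⟨b, rfl⟩ := ha
    refine ⟨⟨F (T.symm b), Set.mem_range_self _⟩, ?_⟩
    rw [hGF (T.symm b)]
    apply Subtype.ext
    show F (T (T.symm b)) = F b
    rw [T.apply_symm_apply]
  have hGinj : Function.Injective G := (Finite.injective_iff_surjective).mpr hGsurj
  have h1 : G ⟨F b, Set.mem_range_self b⟩ = G ⟨F c, Set.mem_range_self c⟩ := by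
    rw [hGF b, hGF c]
    exact Subtype.ext ((hFiff (T b) (T c)).mpr h)
  have h2 := hGinj h1
  exact (hFiff b c).mp (congrArg Subtype.val h2)

theorem odo_iterZ_agree (hsub : ∀ n, Subsingleton (B.V n)) (T : B.PathSpace ≃ B.PathSpace)
    (hV : B.IsVershik T) (ℓ : ℕ) :
    ∀ (m : ℤ) (b c : B.PathSpace),
      (∀ i, i < ℓ → (B.iterZ T m b).1 i = (B.iterZ T m c).1 i) →
      ∀ i, i < ℓ → b.1 i = c.1 i := by
  intro m
  induction m using Int.induction_on with
  | zero =>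
      intro b c h i hi
      have := h i hi
      rwa [B.iterZ_zero, B.iterZ_zero] at this
  | succ k ih =>
      intro b c h
      have h' : ∀ j, j < ℓ → (B.iterZ T k (T b)).1 j = (B.iterZ T k (T c)).1 j := by
        intro j hj
        rw [← B.iterZ_succ T k b, ← B.iterZ_succ T k c]
        exact h j hj
      exact B.odo_back_agree hsub T hV ℓ b c (ih (T b) (T c) h')
  | pred k ih =>
      intro b c h
      have h' : ∀ j, j < ℓ → (B.iterZ T (-k) (T.symm b)).1 j =
          (B.iterZ T (-k) (T.symm c)).1 j := by
        intro j hj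
        rw [← B.iterZ_pred T (-k) b, ← B.iterZ_pred T (-k) c]
        exact h j hj
      have hS := ih (T.symm b) (T.symm c) h'
      have hstep := B.odo_step_agree hsub T hV ℓ (T.symm b) (T.symm c) hS
      intro j hj
      have h2 := hstep j hj
      rwa [T.apply_symm_apply, T.apply_symm_apply] at h2

/-!  ### Topological lemmas -/

theorem cylinder_open (a : B.PathSpace) (ℓ : ℕ) :
    @IsOpen _ B.pathTop {b : B.PathSpace | ∀ j, j < ℓ → b.1 j = a.1 j} := by
  letI : ∀ n, TopologicalSpace (B.E n) := fun _ => ⊥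
  haveI : ∀ n, DiscreteTopology (B.E n) := fun n => ⟨rfl⟩
  letI tX : TopologicalSpace B.PathSpace := B.pathTop
  have hrw : {b : B.PathSpace | ∀ j, j < ℓ → b.1 j = a.1 j} =
      ⋂ j : Fin ℓ, (fun b : B.PathSpace => b.1 j.val) ⁻¹' {a.1 j.val} := by
    ext b
    simp only [Set.mem_iInter, Set.mem_preimage, Set.mem_singleton_iff, Set.mem_setOf_eq]
    exact ⟨fun h j => h j.val j.isLt, fun h j hj => h ⟨j, hj⟩⟩
  rw [hrw]
  refine isOpen_iInter_of_finite fun j => ?_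
  have hcont : Continuous (fun b : B.PathSpace => b.1 j.val) :=
    (continuous_apply (j.val : ℕ)).comp continuous_induced_dom
  exact (isOpen_discrete _).preimage hcont

theorem exists_min_cyl_subset (xmin : B.PathSpace) (hxmin : B.IsMinPath xmin)
    (huniq : ∀ y, B.IsMinPath y → y = xmin)
    (U : Set B.PathSpace) (hU : @IsOpen _ B.pathTop U) (hxU : xmin ∈ U) :
    ∃ N, ∀ y : B.PathSpace, (∀ i, i < N → B.IsMinEdge (y.1 i)) → y ∈ U := by
  letI : ∀ n, TopologicalSpace (B.E n) := fun _ => ⊥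
  haveI : ∀ n, DiscreteTopology (B.E n) := fun n => ⟨rfl⟩
  haveI : ∀ n, Finite (B.E n) := fun n => @Finite.of_fintype _ (B.fintE n)
  letI tX : TopologicalSpace B.PathSpace := B.pathTop
  have hval : Continuous (Subtype.val : B.PathSpace → ∀ n, B.E n) := continuous_induced_dom
  haveI hcs : CompactSpace B.PathSpace := by
    have hclosed : IsClosed {f : ∀ n, B.E n | ∀ n, B.tgt (f n) = B.src (f (n + 1))} := by
      rw [Set.setOf_forall]
      refine isClosed_iInter fun n => ?_
      have : {f : ∀ n, B.E n | B.tgt (f n) = B.src (f (n + 1))} =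
          (fun f : ∀ n, B.E n => (f n, f (n + 1))) ⁻¹'
            {p : B.E n × B.E (n + 1) | B.tgt p.1 = B.src p.2} := rfl
      rw [this]
      exact (isClosed_discrete _).preimage
        ((continuous_apply n).prodMk (continuous_apply (n + 1)))
    exact isCompact_iff_compactSpace.mp hclosed.isCompact
  by_contra hcon
  push_neg at hcon
  have hSclosed : ∀ N : ℕ, IsClosed {y : B.PathSpace | ∀ i, i < N → B.IsMinEdge (y.1 i)} := by
    intro N
    rw [Set.setOf_forall]
    refine isClosed_iInter fun i => ?_
    by_cases hiN : i < N
    · simp only [hiN, forall_true_left]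
      have : {y : B.PathSpace | B.IsMinEdge (y.1 i)} =
          (fun y : B.PathSpace => y.1 i) ⁻¹' {e | B.IsMinEdge e} := rfl
      rw [this]
      exact (isClosed_discrete _).preimage ((continuous_apply i).comp hval)
    · have : {y : B.PathSpace | i < N → B.IsMinEdge (y.1 i)} = Set.univ := by
        ext y
        simp [hiN]
      rw [this]
      exact isClosed_univ
  set S : ℕ → Set B.PathSpace :=
    fun N => {y | ∀ i, i < N → B.IsMinEdge (y.1 i)} ∩ Uᶜ with hSdef
  have hdec : ∀ N, S (N + 1) ⊆ S N := fun N y hy => ⟨fun i hi => hy.1 i (by omega), hy.2⟩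
  have hnon : ∀ N, (S N).Nonempty := by
    intro N
    obtain ⟨y, hy1, hy2⟩ := hcon N
    exact ⟨y, hy1, hy2⟩
  have hcl : ∀ N, IsClosed (S N) := fun N => (hSclosed N).inter hU.isClosed_compl
  obtain ⟨y, hy⟩ := IsCompact.nonempty_iInter_of_sequence_nonempty_isCompact_isClosed
    S hdec hnon ((hcl 0).isCompact) hcl
  have hyU : y ∈ Uᶜ := (Set.mem_iInter.mp hy 0).2
  have hymin : B.IsMinPath y := fun i => (Set.mem_iInter.mp hy (i + 1)).1 i (Nat.lt_succ_self i)
  exact hyU (huniq y hymin ▸ hxU)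

end BDiagram

theorem conj_iterZ (B B' : BDiagram) (T : B.PathSpace ≃ B.PathSpace)
    (T' : B'.PathSpace ≃ B'.PathSpace) (φ : B.PathSpace ≃ B'.PathSpace)
    (h : ∀ x, φ (T x) = T' (φ x)) :
    ∀ (m : ℤ) (x : B.PathSpace), φ (B.iterZ T m x) = B'.iterZ T' m (φ x) := by
  have hsymm : ∀ x, φ (T.symm x) = T'.symm (φ x) := by
    intro x
    have h2 := h (T.symm x)
    rw [T.apply_symm_apply] at h2
    rw [h2, T'.symm_apply_apply]
  intro m
  induction m using Int.induction_on with
  | zero => intro x; rw [B.iterZ_zero, B'.iterZ_zero]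
  | succ k ih =>
      intro x
      rw [B.iterZ_succ T k x, B'.iterZ_succ T' k (φ x), ih (T x), h x]
  | pred k ih =>
      intro x
      rw [B.iterZ_pred T (-k) x, B'.iterZ_pred T' (-k) (φ x), ih (T.symm x), hsymm x]

/-- A Bratteli–Vershik system: a simple, properly ordered ordered Bratteli diagram
together with its Vershik map. -/
structure BVSystem where
  B : BDiagram
  T : B.PathSpace ≃ B.PathSpace
  proper : B.ProperlyOrdered
  simple : B.Simple
  vershik : B.IsVershik T

/-- Conjugacy of systems: an equivariant homeomorphism of the path spaces taking
minimal paths to minimal paths. -/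
def Conjugate (S S' : BVSystem) : Prop :=
  ∃ φ : S.B.PathSpace ≃ S'.B.PathSpace,
    (@Continuous _ _ S.B.pathTop S'.B.pathTop φ) ∧
    (@Continuous _ _ S'.B.pathTop S.B.pathTop φ.symm) ∧
    (∀ x, φ (S.T x) = S'.T (φ x)) ∧
    (∀ x, S.B.IsMinPath x → S'.B.IsMinPath (φ x))

/-- An odometer: a system whose diagram has exactly one vertex at every level. -/
def IsOdometer (S : BVSystem) : Prop := ∀ n, Subsingleton (S.B.V n)

/-- No standard nonexpansive simple, properly ordered
Bratteli–Vershik system is conjugate to any odometer. -/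
theorem sne_not_conjugate_to_odometer
    (S : BVSystem) (hsne : S.B.SNE) :
    ¬ ∃ S' : BVSystem, Conjugate S S' ∧ IsOdometer S' := by
  rintro ⟨S', ⟨φ, hc, hc', heqv, hminmap⟩, hodo⟩
  obtain ⟨x, x', hne, hk⟩ := hsne 1 le_rfl
  obtain ⟨xmin, hxmin, huniq⟩ := S.proper.1
  have heqZ := conj_iterZ S.B S'.B S.T S'.T φ heqv
  have key : ∀ ℓ i, i < ℓ → (φ x).1 i = (φ x').1 i := by
    intro ℓ
    have hUopen := S'.B.cylinder_open (φ xmin) ℓ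
    have hpre : @IsOpen _ S.B.pathTop
        (φ ⁻¹' {b : S'.B.PathSpace | ∀ j, j < ℓ → b.1 j = (φ xmin).1 j}) := by
      letI := S.B.pathTop
      letI := S'.B.pathTop
      exact hUopen.preimage hc
    have hxminU : xmin ∈ φ ⁻¹' {b : S'.B.PathSpace | ∀ j, j < ℓ → b.1 j = (φ xmin).1 j} :=
      fun j hj => rfl
    obtain ⟨N, hN⟩ := S.B.exists_min_cyl_subset xmin hxmin huniq _ hpre hxminU
    obtain ⟨mz, hcut1, hcut2⟩ := S.B.cut_of_kequivAt S.T S.vershik x x' 1 (max N 2)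
      (hk.2 (max N 2) (by have := le_max_right N 2; omega))
    have hU1 := hN (S.B.iterZ S.T mz x)
      (fun i hi => hcut1 i (by have := le_max_left N 2; omega))
    have hU2 := hN (S.B.iterZ S.T mz x')
      (fun i hi => hcut2 i (by have := le_max_left N 2; omega))
    have hagreeT : ∀ j, j < ℓ →
        (S'.B.iterZ S'.T mz (φ x)).1 j = (S'.B.iterZ S'.T mz (φ x')).1 j := by
      intro j hj
      have e1 : (S'.B.iterZ S'.T mz (φ x)).1 j = (φ xmin).1 j := by
        rw [← heqZ mz x]
        exact hU1 j hj
      have e2 : (S'.B.iterZ S'.T mz (φ x')).1 j = (φ xmin).1 j := by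
        rw [← heqZ mz x']
        exact hU2 j hj
      rw [e1, e2]
    exact S'.B.odo_iterZ_agree hodo S'.T S'.vershik ℓ mz (φ x) (φ x') hagreeT
  exact hne (φ.injective (S'.B.pathSpace_ext fun i => key (i + 1) i (Nat.lt_succ_self i)))
end

section
/- Let (X,T) be a simple, properly ordered Bratteli-Vershik system and let (X',T') be its telescoping to levels 0 = n_0 < n_1 < n_2 < .... Let x, y be a depth k pair of paths in X. If k < n_1, then the image paths of x and y in X' have different 1-codings. If k >= n_1 and l is the unique index with n_l <= k < n_{l+1}, then the images of x and y under the telescoping form a depth l pair in X'. In particular, the depth of the image pair tends to infinity as k tends to infinity. -/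
set_option autoImplicit false

namespace BDiagram

variable (B : BDiagram)

theorem castV_congr {m m' n : ℕ} (h : m = n) (h' : m' = n) {v : B.V m} {v' : B.V m'}
    (hv : HEq v v') : B.castV h v = B.castV h' v' := by
  subst h; subst h'; exact congrArg _ (eq_of_heq hv)

theorem castE_eq_of_heq {m n : ℕ} (h : m = n) {e : B.E m} {f : B.E n} (hef : HEq e f) :
    B.castE h e = f := by subst h; exact eq_of_heq hef

theorem castE_heq {m n : ℕ} (h : m = n) (e : B.E m) : HEq (B.castE h e) e := by
  subst h; rfl

theorem castE_symm_castE {m n : ℕ} (h : m = n) (e : B.E m) :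
    B.castE h.symm (B.castE h e) = e := by subst h; rfl

theorem tgt_castE {m n : ℕ} (h : m = n) (e : B.E m) :
    B.tgt (B.castE h e) = B.castV (by omega) (B.tgt e) := by subst h; rfl

theorem elt_castE {m n : ℕ} (h : m = n) {e f : B.E m} (he : B.elt e f) :
    B.elt (B.castE h e) (B.castE h f) := by subst h; exact he

theorem src_heq {m m' : ℕ} (h : m = m') {e : B.E m} {e' : B.E m'} (he : HEq e e') :
    HEq (B.src e) (B.src e') := by subst h; rw [eq_of_heq he]

theorem tgt_heq {m m' : ℕ} (h : m = m') {e : B.E m} {e' : B.E m'} (he : HEq e e') :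
    HEq (B.tgt e) (B.tgt e') := by subst h; rw [eq_of_heq he]

theorem path_heq (x : B.PathSpace) {m n : ℕ} (h : m = n) : HEq (x.1 m) (x.1 n) := by
  subst h; rfl

/-! ### the level function -/

open scoped Classical in
noncomputable def lev (ns : ℕ → ℕ) (n : ℕ) : ℕ := Nat.findGreatest (fun l => ns l ≤ n) n

theorem lev_le (ns : ℕ → ℕ) (h0 : ns 0 = 0) (n : ℕ) : ns (lev ns n) ≤ n := by
  classical
  show (fun l => ns l ≤ n) (lev ns n)
  unfold lev
  exact Nat.findGreatest_spec (P := fun l => ns l ≤ n) (m := 0) (Nat.zero_le n)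
    (by simpa [h0] using Nat.zero_le n)

theorem lt_lev (ns : ℕ → ℕ) (hmono : StrictMono ns) (n : ℕ) : n < ns (lev ns n + 1) := by
  classical
  by_cases h : lev ns n + 1 ≤ n
  · have h2 : ¬ (fun l => ns l ≤ n) (lev ns n + 1) := by
      unfold lev
      exact Nat.findGreatest_is_greatest (P := fun l => ns l ≤ n)
        (Nat.lt_succ_self _) h
    simp only [not_le] at h2
    exact h2
  · have := hmono.le_apply (x := lev ns n + 1)
    omega

theorem lev_eq (ns : ℕ → ℕ) (hmono : StrictMono ns) (h0 : ns 0 = 0) {n l : ℕ}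
    (h1 : ns l ≤ n) (h2 : n < ns (l + 1)) : lev ns n = l := by
  rcases lt_trichotomy (lev ns n) l with h | h | h
  · have h3 := lt_lev ns hmono n
    have h4 : ns (lev ns n + 1) ≤ ns l := hmono.monotone (by omega)
    omega
  · exact h
  · have h3 := lev_le ns h0 n
    have h4 : ns (l + 1) ≤ ns (lev ns n) := hmono.monotone (by omega)
    omega

section Tel

variable (ns : ℕ → ℕ) (hmono : StrictMono ns) (h0 : ns 0 = 0)

theorem lev_sum (ns : ℕ → ℕ) (h0 : ns 0 = 0) (n : ℕ) :
    ns (lev ns n) + (n - ns (lev ns n)) = n := by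
  have := lev_le ns h0 n; omega

theorem lev_idx (ns : ℕ → ℕ) (hmono : StrictMono ns) (h0 : ns 0 = 0) (n : ℕ) :
    n - ns (lev ns n) < ns (lev ns n + 1) - ns (lev ns n) := by
  have := lev_le ns h0 n; have := lt_lev ns hmono n; omega

theorem block_entry_heq (z : (B.Telescope ns hmono h0).PathSpace) {l l' i i' : ℕ}
    (hll : l = l') (hii : i = i')
    (hi : i < ns (l + 1) - ns l) (hi' : i' < ns (l' + 1) - ns l') :
    HEq ((z.1 l).1 ⟨i, hi⟩) ((z.1 l').1 ⟨i', hi'⟩) := by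
  subst hll; subst hii; rfl

theorem src_block_heq (z : (B.Telescope ns hmono h0).PathSpace) {l l' i i' : ℕ}
    (hll : l = l') (hii : i = i')
    (hi : i < ns (l + 1) - ns l) (hi' : i' < ns (l' + 1) - ns l') :
    HEq (B.src ((z.1 l).1 ⟨i, hi⟩)) (B.src ((z.1 l').1 ⟨i', hi'⟩)) := by
  subst hll; subst hii; rfl

theorem tgt_block_heq (z : (B.Telescope ns hmono h0).PathSpace) {l l' i i' : ℕ}
    (hll : l = l') (hii : i = i')
    (hi : i < ns (l + 1) - ns l) (hi' : i' < ns (l' + 1) - ns l') :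
    HEq (B.tgt ((z.1 l).1 ⟨i, hi⟩)) (B.tgt ((z.1 l').1 ⟨i', hi'⟩)) := by
  subst hll; subst hii; rfl

noncomputable def fromTel (z : (B.Telescope ns hmono h0).PathSpace) : B.PathSpace :=
  ⟨fun n => B.castE (lev_sum ns h0 n)
      ((z.1 (lev ns n)).1 ⟨n - ns (lev ns n), lev_idx ns hmono h0 n⟩),
   by
    intro n
    have hle := lev_le ns h0 n
    have hlt := lt_lev ns hmono n
    have hle1 := lev_le ns h0 (n + 1)
    have hlt1 := lt_lev ns hmono (n + 1)
    rw [B.tgt_castE, B.src_castE]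
    by_cases hcase : n + 1 < ns (lev ns n + 1)
    · have hl' : lev ns (n + 1) = lev ns n := lev_eq ns hmono h0 (by omega) hcase
      have hns : ns (lev ns (n + 1)) = ns (lev ns n) := by rw [hl']
      refine B.castV_congr _ _ ?_
      have hchain := (z.1 (lev ns n)).2 (n - ns (lev ns n)) (by omega)
      refine (heq_of_eq hchain).trans ?_
      exact (src_block_heq B ns hmono h0 z hl' (by omega) _ _).symm
    · have hcase' : n + 1 = ns (lev ns n + 1) := by omega
      have hl' : lev ns (n + 1) = lev ns n + 1 := by
        refine lev_eq ns hmono h0 (by omega) ?_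
        have := hmono (show lev ns n + 1 < lev ns n + 1 + 1 by omega); omega
      have hns : ns (lev ns (n + 1)) = ns (lev ns n + 1) := by rw [hl']
      refine B.castV_congr _ _ ?_
      have hz : B.telTgt (hmono (show lev ns n < lev ns n + 1 by omega)) (z.1 (lev ns n)) =
          B.telSrc (hmono (show lev ns n + 1 < lev ns n + 1 + 1 by omega))
            (z.1 (lev ns n + 1)) := z.2 (lev ns n)
      unfold telTgt telSrc at hz
      refine HEq.trans ?_ (HEq.trans (B.castV_heq _ _).symm (HEq.trans (heq_of_eq hz) ?_))
      · exact tgt_block_heq B ns hmono h0 z rfl (by omega) _ _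
      · exact (src_block_heq B ns hmono h0 z hl' (by omega) _ _).symm⟩

theorem fromTel_teleMap (x : B.PathSpace) :
    fromTel B ns hmono h0 (B.teleMap ns hmono h0 x) = x := by
  apply Subtype.ext; funext n
  show B.castE (lev_sum ns h0 n) (x.1 (ns (lev ns n) + (n - ns (lev ns n)))) = x.1 n
  exact B.castE_eq_of_heq _ (B.path_heq x (lev_sum ns h0 n))

theorem fromTel_entry (z : (B.Telescope ns hmono h0).PathSpace) {n l : ℕ}
    (h1 : ns l ≤ n) (h2 : n < ns (l + 1)) (hi : n - ns l < ns (l + 1) - ns l) :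
    HEq ((fromTel B ns hmono h0 z).1 n) ((z.1 l).1 ⟨n - ns l, hi⟩) := by
  have hl : lev ns n = l := lev_eq ns hmono h0 h1 h2
  refine HEq.trans (B.castE_heq (lev_sum ns h0 n) _) ?_
  exact block_entry_heq B ns hmono h0 z hl (by rw [hl]) _ _

theorem fromTel_injective : Function.Injective (fromTel B ns hmono h0) := by
  intro z z' h
  apply Subtype.ext; funext l
  apply Subtype.ext; funext i
  have h1 : ns l ≤ ns l + i.val := Nat.le_add_right _ _
  have h2 : ns l + i.val < ns (l + 1) := by have := i.isLt; omega
  have hi : (ns l + i.val) - ns l < ns (l + 1) - ns l := by have := i.isLt; omega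
  have e1 := fromTel_entry B ns hmono h0 z h1 h2 hi
  have e2 := fromTel_entry B ns hmono h0 z' h1 h2 hi
  have key : HEq ((z.1 l).1 ⟨ns l + i.val - ns l, hi⟩) ((z'.1 l).1 ⟨ns l + i.val - ns l, hi⟩) :=
    e1.symm.trans ((heq_of_eq (congrFun (congrArg Subtype.val h) (ns l + i.val))).trans e2)
  have hfin : (⟨ns l + i.val - ns l, hi⟩ : Fin (ns (l + 1) - ns l)) = i := Fin.ext (show ns l + i.val - ns l = i.val by omega)
  rw [← hfin]
  exact eq_of_heq key

theorem teleMap_fromTel (z : (B.Telescope ns hmono h0).PathSpace) :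
    B.teleMap ns hmono h0 (fromTel B ns hmono h0 z) = z :=
  fromTel_injective B ns hmono h0 (fromTel_teleMap B ns hmono h0 (fromTel B ns hmono h0 z))

theorem teleMap_injective : Function.Injective (B.teleMap ns hmono h0) := fun x y h => by
  rw [← fromTel_teleMap B ns hmono h0 x, ← fromTel_teleMap B ns hmono h0 y, h]


theorem teleMap_pathLT {x y : B.PathSpace} :
    (B.Telescope ns hmono h0).pathLT (B.teleMap ns hmono h0 x) (B.teleMap ns hmono h0 y) ↔
      B.pathLT x y := by
  constructor
  · rintro ⟨L, hLlt, hafter⟩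
    obtain ⟨N', hidx, helt, habove⟩ := hLlt
    refine ⟨ns L + N', helt, ?_⟩
    intro n hn
    by_cases hc : n < ns (L + 1)
    · have h1 : ns L ≤ n := by omega
      have h3 : x.1 (ns L + (n - ns L)) = y.1 (ns L + (n - ns L)) :=
        habove (n - ns L) (by omega) (by omega)
      have h2 : ns L + (n - ns L) = n := by omega
      rw [h2] at h3
      exact h3
    · have hLn : L < lev ns n := by
        by_contra hcon
        have h4 : ns (lev ns n + 1) ≤ ns (L + 1) := hmono.monotone (by omega)
        have := lt_lev ns hmono n; omega
      have hblock := hafter (lev ns n) hLn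
      have h1 := lev_le ns h0 n
      have hcomp : x.1 (ns (lev ns n) + (n - ns (lev ns n))) =
          y.1 (ns (lev ns n) + (n - ns (lev ns n))) :=
        congrFun (congrArg Subtype.val hblock) ⟨n - ns (lev ns n), lev_idx ns hmono h0 n⟩
      have h2 := lev_sum ns h0 n
      rw [h2] at hcomp
      exact hcomp
  · rintro ⟨N, helt, hafter⟩
    have h1 := lev_le ns h0 N
    have h2 := lt_lev ns hmono N
    refine ⟨lev ns N, ?_, ?_⟩
    · show B.telLT _ _
      refine ⟨N - ns (lev ns N), lev_idx ns hmono h0 N, ?_, ?_⟩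
      · show B.elt (x.1 (ns (lev ns N) + (N - ns (lev ns N))))
          (y.1 (ns (lev ns N) + (N - ns (lev ns N))))
        rw [lev_sum ns h0 N]
        exact helt
      · intro i hi hNi
        show x.1 (ns (lev ns N) + i) = y.1 (ns (lev ns N) + i)
        exact hafter _ (by omega)
    · intro l hl
      apply Subtype.ext; funext i
      show x.1 (ns l + i.val) = y.1 (ns l + i.val)
      have h3 : ns (lev ns N + 1) ≤ ns l := hmono.monotone (by omega)
      exact hafter _ (by omega)

theorem isMinPath_teleMap {x : B.PathSpace} (hx : B.IsMinPath x) :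
    (B.Telescope ns hmono h0).IsMinPath (B.teleMap ns hmono h0 x) := by
  intro l g hg
  obtain ⟨N, hN, helt, -⟩ := hg
  exact hx (ns l + N) _ helt

theorem isMaxPath_teleMap {x : B.PathSpace} (hx : B.IsMaxPath x) :
    (B.Telescope ns hmono h0).IsMaxPath (B.teleMap ns hmono h0 x) := by
  intro l g hg
  obtain ⟨N, hN, helt, -⟩ := hg
  exact hx (ns l + N) _ helt

end Tel

/-! ### block modification -/

noncomputable def modFun (a b N : ℕ) (f : B.TelE a b) (e' : B.E (a + N))
    (i : ℕ) (hi : i < b - a) : B.E (a + i) :=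
  if h1 : N < i then f.1 ⟨i, hi⟩
  else if h2 : i = N then B.castE (by omega) e'
  else B.chainTo a (N - 1) (B.castV (by omega : a + N = a + (N - 1) + 1) (B.src e')) i (by omega)

theorem modFun_gt (a b N : ℕ) (f : B.TelE a b) (e' : B.E (a + N))
    (i : ℕ) (hi : i < b - a) (hgt : N < i) :
    B.modFun a b N f e' i hi = f.1 ⟨i, hi⟩ := by
  unfold modFun; rw [dif_pos hgt]

theorem modFun_at (a b N : ℕ) (f : B.TelE a b) (e' : B.E (a + N)) (hN : N < b - a) :
    B.modFun a b N f e' N hN = e' := by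
  unfold modFun
  rw [dif_neg (lt_irrefl N), dif_pos rfl]
  exact eq_of_heq (B.castE_heq _ e')

theorem modFun_chain (a b N : ℕ) (f : B.TelE a b) (e' : B.E (a + N)) (hN : N < b - a)
    (htgt : B.tgt e' = B.tgt (f.1 ⟨N, hN⟩)) (i : ℕ) (h : i + 1 < b - a) (h' : i < b - a) :
    B.tgt (B.modFun a b N f e' i h') = B.src (B.modFun a b N f e' (i + 1) h) := by
  unfold modFun
  by_cases hc1 : N < i
  · rw [dif_pos hc1, dif_pos (by omega : N < i + 1)]
    exact f.2 i h
  · by_cases hc2 : i = N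
    · subst hc2
      rw [dif_neg (lt_irrefl i), dif_pos rfl, dif_pos (by omega : i < i + 1)]
      rw [B.tgt_castE]
      exact eq_of_heq ((B.castV_heq _ _).trans (heq_of_eq (htgt.trans (f.2 i h))))
    · rw [dif_neg hc1, dif_neg hc2]
      by_cases hc3 : i + 1 = N
      · subst hc3
        rw [dif_neg (by omega : ¬ i + 1 < i + 1), dif_pos rfl]
        rw [B.src_castE]
        have hlast := B.chainTo_tgt_last a i (B.castV (by omega : a + (i + 1) = a + i + 1) (B.src e'))
        refine Eq.trans ?_ (Eq.trans hlast ?_)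
        · rfl
        · exact B.castV_congr _ _ HEq.rfl
      · rw [dif_neg (by omega : ¬ N < i + 1), dif_neg hc3]
        exact B.chainTo_chain a (N - 1) _ i (by omega) (by omega)

section Tel2

variable (ns : ℕ → ℕ) (hmono : StrictMono ns) (h0 : ns 0 = 0)

theorem isMinPath_fromTel (z : (B.Telescope ns hmono h0).PathSpace)
    (hz : (B.Telescope ns hmono h0).IsMinPath z) : B.IsMinPath (fromTel B ns hmono h0 z) := by
  intro n e' he'
  have hle := lev_le ns h0 n
  have hlt := lt_lev ns hmono n
  have he'' : B.elt e' (B.castE (lev_sum ns h0 n)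
      ((z.1 (lev ns n)).1 ⟨n - ns (lev ns n), lev_idx ns hmono h0 n⟩)) := he'
  have he2 : B.elt (B.castE (lev_sum ns h0 n).symm e')
      ((z.1 (lev ns n)).1 ⟨n - ns (lev ns n), lev_idx ns hmono h0 n⟩) := by
    have h3 := B.elt_castE (lev_sum ns h0 n).symm he''
    rwa [B.castE_symm_castE] at h3
  have htgt : B.tgt (B.castE (lev_sum ns h0 n).symm e') =
      B.tgt ((z.1 (lev ns n)).1 ⟨n - ns (lev ns n), lev_idx ns hmono h0 n⟩) :=
    B.elt_tgt _ _ _ he2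
  refine hz (lev ns n)
    ⟨fun i => B.modFun (ns (lev ns n)) (ns (lev ns n + 1)) (n - ns (lev ns n)) (z.1 (lev ns n))
        (B.castE (lev_sum ns h0 n).symm e') i.val i.isLt,
     fun i h => B.modFun_chain _ _ _ _ _ (lev_idx ns hmono h0 n) htgt i h (by omega)⟩
    ⟨n - ns (lev ns n), lev_idx ns hmono h0 n, ?_, ?_⟩
  · show B.elt (B.modFun (ns (lev ns n)) (ns (lev ns n + 1)) (n - ns (lev ns n))
        (z.1 (lev ns n)) (B.castE (lev_sum ns h0 n).symm e') (n - ns (lev ns n))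
        (lev_idx ns hmono h0 n))
      ((z.1 (lev ns n)).1 ⟨n - ns (lev ns n), lev_idx ns hmono h0 n⟩)
    exact (congrArg (fun e => B.elt e ((z.1 (lev ns n)).1 ⟨n - ns (lev ns n), lev_idx ns hmono h0 n⟩))
      (B.modFun_at (ns (lev ns n)) (ns (lev ns n + 1)) (n - ns (lev ns n)) (z.1 (lev ns n))
        (B.castE (lev_sum ns h0 n).symm e') (lev_idx ns hmono h0 n))).mpr he2
  · intro i hi hNi
    exact B.modFun_gt _ _ _ _ _ i hi hNi

theorem isMaxPath_fromTel (z : (B.Telescope ns hmono h0).PathSpace)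
    (hz : (B.Telescope ns hmono h0).IsMaxPath z) : B.IsMaxPath (fromTel B ns hmono h0 z) := by
  intro n e' he'
  have hle := lev_le ns h0 n
  have hlt := lt_lev ns hmono n
  have he'' : B.elt (B.castE (lev_sum ns h0 n)
      ((z.1 (lev ns n)).1 ⟨n - ns (lev ns n), lev_idx ns hmono h0 n⟩)) e' := he'
  have he2 : B.elt ((z.1 (lev ns n)).1 ⟨n - ns (lev ns n), lev_idx ns hmono h0 n⟩)
      (B.castE (lev_sum ns h0 n).symm e') := by
    have h3 := B.elt_castE (lev_sum ns h0 n).symm he''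
    rwa [B.castE_symm_castE] at h3
  have htgt : B.tgt (B.castE (lev_sum ns h0 n).symm e') =
      B.tgt ((z.1 (lev ns n)).1 ⟨n - ns (lev ns n), lev_idx ns hmono h0 n⟩) :=
    (B.elt_tgt _ _ _ he2).symm
  refine hz (lev ns n)
    ⟨fun i => B.modFun (ns (lev ns n)) (ns (lev ns n + 1)) (n - ns (lev ns n)) (z.1 (lev ns n))
        (B.castE (lev_sum ns h0 n).symm e') i.val i.isLt,
     fun i h => B.modFun_chain _ _ _ _ _ (lev_idx ns hmono h0 n) htgt i h (by omega)⟩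
    ⟨n - ns (lev ns n), lev_idx ns hmono h0 n, ?_, ?_⟩
  · show B.elt ((z.1 (lev ns n)).1 ⟨n - ns (lev ns n), lev_idx ns hmono h0 n⟩)
      (B.modFun (ns (lev ns n)) (ns (lev ns n + 1)) (n - ns (lev ns n))
        (z.1 (lev ns n)) (B.castE (lev_sum ns h0 n).symm e') (n - ns (lev ns n))
        (lev_idx ns hmono h0 n))
    exact (congrArg (fun e => B.elt ((z.1 (lev ns n)).1 ⟨n - ns (lev ns n), lev_idx ns hmono h0 n⟩) e)
      (B.modFun_at (ns (lev ns n)) (ns (lev ns n + 1)) (n - ns (lev ns n)) (z.1 (lev ns n))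
        (B.castE (lev_sum ns h0 n).symm e') (lev_idx ns hmono h0 n))).mpr he2
  · intro i hi hNi
    exact (B.modFun_gt _ _ _ _ _ i hi hNi).symm

theorem isMaxPath_teleMap_rev {x : B.PathSpace}
    (h : (B.Telescope ns hmono h0).IsMaxPath (B.teleMap ns hmono h0 x)) : B.IsMaxPath x := by
  have h2 := isMaxPath_fromTel B ns hmono h0 _ h
  rwa [fromTel_teleMap] at h2

theorem isMinPath_teleMap_rev {x : B.PathSpace}
    (h : (B.Telescope ns hmono h0).IsMinPath (B.teleMap ns hmono h0 x)) : B.IsMinPath x := by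
  have h2 := isMinPath_fromTel B ns hmono h0 _ h
  rwa [fromTel_teleMap] at h2

end Tel2


/-! ### uniqueness of the Vershik map, conjugacy under telescoping -/

theorem pathLT_total (D : BDiagram) {u v : D.PathSpace} (hne : u ≠ v) {M : ℕ}
    (hM : ∀ n, M ≤ n → u.1 n = v.1 n) : D.pathLT u v ∨ D.pathLT v u := by
  classical
  have hex : ∃ n, u.1 n ≠ v.1 n := by
    by_contra hco; push_neg at hco
    exact hne (Subtype.ext (funext hco))
  obtain ⟨n₀, hn₀⟩ := hex
  have hn₀M : n₀ < M := by
    by_contra hcon; exact hn₀ (hM n₀ (by omega))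
  have hPN : u.1 (Nat.findGreatest (fun n => u.1 n ≠ v.1 n) M) ≠
      v.1 (Nat.findGreatest (fun n => u.1 n ≠ v.1 n) M) :=
    Nat.findGreatest_spec (P := fun n => u.1 n ≠ v.1 n) (le_of_lt hn₀M) hn₀
  set N := Nat.findGreatest (fun n => u.1 n ≠ v.1 n) M with hNdef
  have hafter : ∀ n, N < n → u.1 n = v.1 n := by
    intro n hn
    by_cases hc : n ≤ M
    · by_contra hcon
      exact Nat.findGreatest_is_greatest (P := fun n => u.1 n ≠ v.1 n) hn hc hcon
    · exact hM n (by omega)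
  have htgt : D.tgt (u.1 N) = D.tgt (v.1 N) := by
    rw [u.2 N, v.2 N, hafter (N + 1) (by omega)]
  rcases D.elt_total N _ _ htgt hPN with h | h
  · exact Or.inl ⟨N, h, hafter⟩
  · exact Or.inr ⟨N, h, fun n hn => (hafter n hn).symm⟩

theorem vershik_succ_unique (D : BDiagram) (S : D.PathSpace ≃ D.PathSpace)
    (hS : D.IsVershik S) {x s : D.PathSpace} (hx : ¬ D.IsMaxPath x)
    (h1 : D.pathLT x s) (h2 : ∀ z, D.pathLT x z → ¬ D.pathLT z s) : s = S x := by
  obtain ⟨h1', h2'⟩ := hS.1 x hx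
  by_contra hne
  obtain ⟨N, -, ha⟩ := id h1
  obtain ⟨N', -, ha'⟩ := id h1'
  have hM : ∀ n, max N N' + 1 ≤ n → s.1 n = (S x).1 n := by
    intro n hn
    exact (ha n (by omega)).symm.trans (ha' n (by omega))
  rcases pathLT_total D hne hM with h | h
  · exact h2' s h1 h
  · exact h2 (S x) h1' h

section Tel3

variable (ns : ℕ → ℕ) (hmono : StrictMono ns) (h0 : ns 0 = 0)

theorem telescope_min_unique (hproper : B.ProperlyOrdered)
    {z z' : (B.Telescope ns hmono h0).PathSpace}
    (h : (B.Telescope ns hmono h0).IsMinPath z)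
    (h' : (B.Telescope ns hmono h0).IsMinPath z') : z = z' := by
  obtain ⟨x₀, -, huniq⟩ := hproper.1
  have e1 : fromTel B ns hmono h0 z = x₀ := huniq _ (isMinPath_fromTel B ns hmono h0 z h)
  have e2 : fromTel B ns hmono h0 z' = x₀ := huniq _ (isMinPath_fromTel B ns hmono h0 z' h')
  exact fromTel_injective B ns hmono h0 (e1.trans e2.symm)

variable (T : B.PathSpace ≃ B.PathSpace)
  (T' : (B.Telescope ns hmono h0).PathSpace ≃ (B.Telescope ns hmono h0).PathSpace)

theorem teleMap_vershik (hT : B.IsVershik T) (hT' : (B.Telescope ns hmono h0).IsVershik T')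
    (hproper : B.ProperlyOrdered) (x : B.PathSpace) :
    T' (B.teleMap ns hmono h0 x) = B.teleMap ns hmono h0 (T x) := by
  by_cases hx : B.IsMaxPath x
  · have h1 := isMaxPath_teleMap B ns hmono h0 hx
    have h2 := hT'.2 _ h1
    have h3 := isMinPath_teleMap B ns hmono h0 (hT.2 x hx)
    exact telescope_min_unique B ns hmono h0 hproper h2 h3
  · have hx' : ¬ (B.Telescope ns hmono h0).IsMaxPath (B.teleMap ns hmono h0 x) :=
      fun hc => hx (isMaxPath_teleMap_rev B ns hmono h0 hc)
    obtain ⟨hlt, hmin⟩ := hT.1 x hx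
    refine (vershik_succ_unique _ T' hT' hx' ?_ ?_).symm
    · exact (teleMap_pathLT B ns hmono h0).mpr hlt
    · intro z hz1 hz2
      rw [(teleMap_fromTel B ns hmono h0 z).symm] at hz1 hz2
      exact hmin (fromTel B ns hmono h0 z) ((teleMap_pathLT B ns hmono h0).mp hz1)
        ((teleMap_pathLT B ns hmono h0).mp hz2)

theorem teleMap_iter (hT : B.IsVershik T) (hT' : (B.Telescope ns hmono h0).IsVershik T')
    (hproper : B.ProperlyOrdered) (m : ℤ) (x : B.PathSpace) :
    ((B.Telescope ns hmono h0).iterZ T' m) (B.teleMap ns hmono h0 x) =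
      B.teleMap ns hmono h0 ((B.iterZ T m) x) := by
  have hnat : ∀ (n : ℕ) (x : B.PathSpace),
      ((T' : Equiv.Perm (B.Telescope ns hmono h0).PathSpace) ^ n) (B.teleMap ns hmono h0 x) =
        B.teleMap ns hmono h0 (((T : Equiv.Perm B.PathSpace) ^ n) x) := by
    intro n
    induction n with
    | zero => intro x; rfl
    | succ n ih =>
      intro x
      rw [pow_succ, pow_succ]
      simp only [Equiv.Perm.mul_apply]
      rw [teleMap_vershik B ns hmono h0 T T' hT hT' hproper, ih]
  rcases m with n | n
  · show ((T' : Equiv.Perm _) ^ (Int.ofNat n)) _ = B.teleMap ns hmono h0 (((T : Equiv.Perm _) ^ (Int.ofNat n)) x)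
    rw [show (Int.ofNat n) = (n : ℤ) from rfl, zpow_natCast, zpow_natCast]
    exact hnat n x
  · show ((T' : Equiv.Perm _) ^ (Int.negSucc n)) _ =
      B.teleMap ns hmono h0 (((T : Equiv.Perm _) ^ (Int.negSucc n)) x)
    rw [zpow_negSucc, zpow_negSucc]
    apply Equiv.injective (((T' : Equiv.Perm (B.Telescope ns hmono h0).PathSpace) ^ (n + 1)))
    rw [← Equiv.Perm.mul_apply, mul_inv_cancel, Equiv.Perm.one_apply, hnat (n + 1),
      ← Equiv.Perm.mul_apply, mul_inv_cancel, Equiv.Perm.one_apply]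

theorem teleMap_coding (hT : B.IsVershik T) (hT' : (B.Telescope ns hmono h0).IsVershik T')
    (hproper : B.ProperlyOrdered) (l : ℕ) (x y : B.PathSpace) :
    (B.Telescope ns hmono h0).SameCoding T' l (B.teleMap ns hmono h0 x) (B.teleMap ns hmono h0 y)
      ↔ B.SameCoding T (ns l) x y := by
  constructor
  · intro h m i hi
    have h3 := lev_le ns h0 i
    have hlev_lt : lev ns i < l := by
      by_contra hcon
      have h4 : ns l ≤ ns (lev ns i) := hmono.monotone (by omega)
      omega
    have hb := h m (lev ns i) hlev_lt
    rw [teleMap_iter B ns hmono h0 T T' hT hT' hproper,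
      teleMap_iter B ns hmono h0 T T' hT hT' hproper] at hb
    have hcomp : (B.iterZ T m x).1 (ns (lev ns i) + (i - ns (lev ns i))) =
        (B.iterZ T m y).1 (ns (lev ns i) + (i - ns (lev ns i))) :=
      congrFun (congrArg Subtype.val hb) ⟨i - ns (lev ns i), lev_idx ns hmono h0 i⟩
    rw [lev_sum ns h0 i] at hcomp
    exact hcomp
  · intro h m j hj
    rw [teleMap_iter B ns hmono h0 T T' hT hT' hproper,
      teleMap_iter B ns hmono h0 T T' hT hT' hproper]
    apply Subtype.ext; funext i
    show (B.iterZ T m x).1 (ns j + i.val) = (B.iterZ T m y).1 (ns j + i.val)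
    have h4 : ns (j + 1) ≤ ns l := hmono.monotone (by omega)
    have h5 := i.isLt
    exact h m _ (by omega)

end Tel3

theorem sameCoding_mono (T : B.PathSpace ≃ B.PathSpace) {k k' : ℕ} (h : k ≤ k')
    {x y : B.PathSpace} (hs : B.SameCoding T k' x y) : B.SameCoding T k x y :=
  fun m i hi => hs m i (by omega)

end BDiagram

/-- Telescoping a simple, properly ordered Bratteli–Vershik
system to levels `0 = ns 0 < ns 1 < ⋯`: if `x, y` is a depth `k` pair, then if
`k < ns 1` the image paths have different `1`-codings, and if `ns l ≤ k < ns (l+1)`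
the image pair is depth `l`; moreover the index `l` tends to infinity with `k`. -/
theorem depth_pair_telescoping
    (B : BDiagram) (T : B.PathSpace ≃ B.PathSpace)
    (hproper : B.ProperlyOrdered) (hsimple : B.Simple) (hT : B.IsVershik T)
    (ns : ℕ → ℕ) (hmono : StrictMono ns) (h0 : ns 0 = 0)
    (T' : (B.Telescope ns hmono h0).PathSpace ≃ (B.Telescope ns hmono h0).PathSpace)
    (hT' : (B.Telescope ns hmono h0).IsVershik T')
    (k : ℕ) (x y : B.PathSpace) (hxy : B.DepthPair T k x y) :
    (k < ns 1 →
      ¬ (B.Telescope ns hmono h0).SameCoding T' 1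
          (B.teleMap ns hmono h0 x) (B.teleMap ns hmono h0 y)) ∧
    (∀ l : ℕ, ns l ≤ k → k < ns (l + 1) →
      (B.Telescope ns hmono h0).DepthPair T' l
        (B.teleMap ns hmono h0 x) (B.teleMap ns hmono h0 y)) ∧
    (∀ M : ℕ, ∃ K : ℕ, ∀ k' l : ℕ, K ≤ k' → ns l ≤ k' → k' < ns (l + 1) → M ≤ l) := by
  refine ⟨?_, ?_, ?_⟩
  · intro hk1 hsc
    have h1 := (B.teleMap_coding ns hmono h0 T T' hT hT' hproper 1 x y).mp hsc
    exact hxy.2.2 (B.sameCoding_mono T (by omega) h1)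
  · intro l hl1 hl2
    refine ⟨?_, ?_, ?_⟩
    · intro hc
      exact hxy.1 (BDiagram.teleMap_injective B ns hmono h0 hc)
    · exact (B.teleMap_coding ns hmono h0 T T' hT hT' hproper l x y).mpr
        (B.sameCoding_mono T hl1 hxy.2.1)
    · intro hc
      exact hxy.2.2 (B.sameCoding_mono T (by omega : k + 1 ≤ ns (l + 1))
        ((B.teleMap_coding ns hmono h0 T T' hT hT' hproper (l + 1) x y).mp hc))
  · intro M
    refine ⟨ns M, ?_⟩
    intro k' l hK h1 h2
    by_contra hc
    have h3 : ns (l + 1) ≤ ns M := hmono.monotone (by omega)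
    omega
end

section
/- Let (X,T) be a simple, properly ordered Bratteli-Vershik system and let (X',T') be its telescoping to levels 0 = n_0 < n_1 < n_2 < .... Suppose x, y is a depth k pair of paths in X that has a j cut, where j >= n_1, and let l be the unique index with n_l <= j < n_{l+1}. Then the image pair of x, y under the telescoping has an l cut in X'. -/
set_option autoImplicit false

section CutTelescopingAux

open BDiagram

theorem happ_heq {α : Sort _} {β : α → Sort _} (f : ∀ a, β a) {i j : α} (h : i = j) :
    HEq (f i) (f j) := by subst h; rfl

variable (B : BDiagram)

theorem BDiagram.castE_heq_s6 {m n : ℕ} (h : m = n) (e : B.E m) : HEq (B.castE h e) e := by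
  subst h; rfl

theorem BDiagram.tgt_heq_s6 {m m' : ℕ} (h : m = m') {e : B.E m} {e' : B.E m'}
    (he : HEq e e') : HEq (B.tgt e) (B.tgt e') := by subst h; rw [eq_of_heq he]

theorem BDiagram.src_heq_s6 {m m' : ℕ} (h : m = m') {e : B.E m} {e' : B.E m'}
    (he : HEq e e') : HEq (B.src e) (B.src e') := by subst h; rw [eq_of_heq he]

theorem BDiagram.elt_congr {m m' : ℕ} (h : m = m') {e f : B.E m} {e' f' : B.E m'}
    (he : HEq e e') (hf : HEq f f') : B.elt e f ↔ B.elt e' f' := by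
  subst h; rw [eq_of_heq he, eq_of_heq hf]

/-- Trichotomy for the cofinal order on paths. -/
theorem BDiagram.pathLT_total_s6 (u v : B.PathSpace) (N : ℕ)
    (hagree : ∀ n, N < n → u.1 n = v.1 n) (hne : u ≠ v) :
    B.pathLT u v ∨ B.pathLT v u := by
  classical
  set P : ℕ → Prop := fun i => u.1 i ≠ v.1 i with hP
  have hex : ∃ i, P i := by
    by_contra hc
    push_neg at hc
    exact hne (Subtype.ext (funext fun i => not_not.mp fun h => hc i h))
  obtain ⟨i0, hi0⟩ := hex
  have hi0N : i0 ≤ N := by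
    by_contra hc
    exact hi0 (hagree i0 (by omega))
  set M := Nat.findGreatest P N with hM
  have hPM : P M := Nat.findGreatest_spec hi0N hi0
  have hafter : ∀ n, M < n → u.1 n = v.1 n := by
    intro n hn
    by_cases hnN : n ≤ N
    · by_contra hc
      exact Nat.findGreatest_is_greatest hn hnN hc
    · exact hagree n (by omega)
  have htgt : B.tgt (u.1 M) = B.tgt (v.1 M) := by
    rw [u.2 M, v.2 M, hafter (M + 1) (Nat.lt_succ_self M)]
  rcases B.elt_total M (u.1 M) (v.1 M) htgt hPM with h | h
  · exact Or.inl ⟨M, h, hafter⟩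
  · exact Or.inr ⟨M, h, fun n hn => (hafter n hn).symm⟩

/-- Replace the edge at position `d` of a finite segment by `e'` (with the same
target), patching everything below using `chainTo`. -/
noncomputable def repEdge {a b : ℕ} (f : B.TelE a b) (d : ℕ) (e' : B.E (a + d))
    (i : ℕ) (hi : i < b - a) : B.E (a + i) :=
  if h1 : i < d then
    B.chainTo a (d - 1) (B.castV (show a + d = a + (d - 1) + 1 by omega) (B.src e')) i
      (by omega)
  else if h2 : i = d then B.castE (by rw [h2]) e' else f.1 ⟨i, hi⟩

theorem repEdge_lt {a b : ℕ} (f : B.TelE a b) (d : ℕ) (e' : B.E (a + d))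
    (i : ℕ) (hi : i < b - a) (h1 : i < d) :
    repEdge B f d e' i hi =
      B.chainTo a (d - 1) (B.castV (show a + d = a + (d - 1) + 1 by omega) (B.src e')) i
        (by omega) := by
  unfold repEdge
  rw [dif_pos h1]

theorem repEdge_eq {a b : ℕ} (f : B.TelE a b) (d : ℕ) (e' : B.E (a + d))
    (i : ℕ) (hi : i < b - a) (h2 : i = d) :
    HEq (repEdge B f d e' i hi) e' := by
  subst h2
  unfold repEdge
  rw [dif_neg (by omega : ¬ i < i), dif_pos rfl]
  exact B.castE_heq_s6 _ _

theorem repEdge_gt {a b : ℕ} (f : B.TelE a b) (d : ℕ) (e' : B.E (a + d))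
    (i : ℕ) (hi : i < b - a) (h : d < i) :
    repEdge B f d e' i hi = f.1 ⟨i, hi⟩ := by
  unfold repEdge
  rw [dif_neg (by omega : ¬ i < d), dif_neg (by omega : ¬ i = d)]

theorem repEdge_chain {a b : ℕ} (f : B.TelE a b) (d : ℕ) (hd : d < b - a)
    (e' : B.E (a + d)) (htgt : B.tgt e' = B.tgt (f.1 ⟨d, hd⟩))
    (i : ℕ) (hi1 : i < b - a) (hi : i + 1 < b - a) :
    B.tgt (repEdge B f d e' i hi1) = B.src (repEdge B f d e' (i + 1) hi) := by
  by_cases c1 : i + 1 < d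
  · rw [repEdge_lt B f d e' i hi1 (by omega), repEdge_lt B f d e' (i + 1) hi c1]
    exact B.chainTo_chain a (d - 1) _ i (by omega) (by omega)
  · by_cases c2 : i + 1 = d
    · have hi' : i = d - 1 := by omega
      subst hi'
      rw [repEdge_lt B f d e' (d - 1) hi1 (by omega)]
      refine eq_of_heq ?_
      have hlast := B.chainTo_tgt_last a (d - 1)
        (B.castV (show a + d = a + (d - 1) + 1 by omega) (B.src e'))
      refine (heq_of_eq hlast).trans ?_
      refine (B.castV_heq _ _).trans ?_
      exact (B.src_heq_s6 (show a + d = a + (d - 1 + 1) by omega)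
        (repEdge_eq B f d e' (d - 1 + 1) hi c2).symm)
    · by_cases c3 : i = d
      · subst c3
        rw [repEdge_gt B f i e' (i + 1) hi (by omega)]
        exact eq_of_heq ((B.tgt_heq_s6 rfl (repEdge_eq B f i e' i hi1 rfl)).trans
          (heq_of_eq (htgt.trans (f.2 i hi))))
      · rw [repEdge_gt B f d e' i hi1 (by omega), repEdge_gt B f d e' (i + 1) hi (by omega)]
        exact f.2 i hi

/-- The segment with position `d` replaced. -/
noncomputable def replaceBelow {a b : ℕ} (f : B.TelE a b) (d : ℕ) (hd : d < b - a)
    (e' : B.E (a + d)) (htgt : B.tgt e' = B.tgt (f.1 ⟨d, hd⟩)) : B.TelE a b :=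
  ⟨fun i => repEdge B f d e' i.val i.isLt,
   fun i hi => repEdge_chain B f d hd e' htgt i (by omega) hi⟩

theorem replaceBelow_telLT_left {a b : ℕ} (f : B.TelE a b) (d : ℕ) (hd : d < b - a)
    (e' : B.E (a + d)) (helt : B.elt e' (f.1 ⟨d, hd⟩)) :
    B.telLT (replaceBelow B f d hd e' (B.elt_tgt _ _ _ helt)) f := by
  refine ⟨d, hd, ?_, ?_⟩
  · exact (B.elt_congr rfl (repEdge_eq B f d e' d hd rfl) HEq.rfl).mpr helt
  · intro i hi hgt
    exact repEdge_gt B f d e' i hi hgt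

theorem replaceBelow_telLT_right {a b : ℕ} (f : B.TelE a b) (d : ℕ) (hd : d < b - a)
    (e' : B.E (a + d)) (helt : B.elt (f.1 ⟨d, hd⟩) e') :
    B.telLT f (replaceBelow B f d hd e' (B.elt_tgt _ _ _ helt).symm) := by
  refine ⟨d, hd, ?_, ?_⟩
  · exact (B.elt_congr rfl HEq.rfl (repEdge_eq B f d e' d hd rfl)).mpr helt
  · intro i hi hgt
    exact (repEdge_gt B f d e' i hi hgt).symm

variable (ns : ℕ → ℕ)

/-- The level of index `i`: the greatest `l` with `ns l ≤ i`. -/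
noncomputable def levAt (i : ℕ) : ℕ := Nat.findGreatest (fun l => ns l ≤ i) i

theorem levAt_le (h0 : ns 0 = 0) (i : ℕ) : ns (levAt ns i) ≤ i :=
  Nat.findGreatest_spec (P := fun l => ns l ≤ i) (Nat.zero_le i) (by simp [h0])

theorem lt_levAt_succ (hmono : StrictMono ns) (i : ℕ) : i < ns (levAt ns i + 1) := by
  by_contra hc
  push_neg at hc
  have h1 : levAt ns i + 1 ≤ ns (levAt ns i + 1) := hmono.le_apply
  exact Nat.findGreatest_is_greatest (P := fun l => ns l ≤ i)
    (Nat.lt_succ_self (levAt ns i)) (le_trans h1 hc) hc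

theorem levAt_eq (hmono : StrictMono ns) (h0 : ns 0 = 0) {l i : ℕ}
    (h1 : ns l ≤ i) (h2 : i < ns (l + 1)) : levAt ns i = l := by
  have a1 := levAt_le ns h0 i
  have a2 := lt_levAt_succ ns hmono i
  have c1 : l < levAt ns i + 1 := by
    have := lt_of_le_of_lt h1 a2
    exact (hmono.lt_iff_lt).mp this
  have c2 : levAt ns i < l + 1 := by
    have := lt_of_le_of_lt a1 h2
    exact (hmono.lt_iff_lt).mp this
  omega

variable (hmono : StrictMono ns) (h0 : ns 0 = 0)

/-- The edges of the untelescoped path. -/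
noncomputable def untelEdge (z' : (B.Telescope ns hmono h0).PathSpace) (n : ℕ) : B.E n :=
  have h1 : ns (levAt ns n) ≤ n := levAt_le ns h0 n
  have h2 : n < ns (levAt ns n + 1) := lt_levAt_succ ns hmono n
  B.castE (show ns (levAt ns n) + (n - ns (levAt ns n)) = n by omega)
    ((z'.1 (levAt ns n)).1 ⟨n - ns (levAt ns n),
      show n - ns (levAt ns n) < ns (levAt ns n + 1) - ns (levAt ns n) by omega⟩)

theorem untelEdge_heq (z' : (B.Telescope ns hmono h0).PathSpace) {n l : ℕ}
    (h1 : ns l ≤ n) (h2 : n < ns (l + 1)) (hf : n - ns l < ns (l + 1) - ns l) :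
    HEq (untelEdge B ns hmono h0 z' n) ((z'.1 l).1 ⟨n - ns l, hf⟩) := by
  have hl : levAt ns n = l := levAt_eq ns hmono h0 h1 h2
  subst hl
  exact B.castE_heq_s6 _ _

/-- Untelescoping: the inverse of `teleMap`. -/
noncomputable def untel (z' : (B.Telescope ns hmono h0).PathSpace) : B.PathSpace := by
  refine ⟨untelEdge B ns hmono h0 z', ?_⟩
  intro n
  have h1 : ns (levAt ns n) ≤ n := levAt_le ns h0 n
  have h2 : n < ns (levAt ns n + 1) := lt_levAt_succ ns hmono n
  set L := levAt ns n with hLdef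
  have hd : n - ns L < ns (L + 1) - ns L := by omega
  have e1 := untelEdge_heq B ns hmono h0 z' h1 h2 hd
  by_cases hcase : n + 1 < ns (L + 1)
  · have hd2 : n + 1 - ns L < ns (L + 1) - ns L := by omega
    have e2 := untelEdge_heq B ns hmono h0 z' (by omega) hcase hd2
    have hfin : (⟨n + 1 - ns L, hd2⟩ : Fin (ns (L + 1) - ns L)) =
        ⟨n - ns L + 1, show n - ns L + 1 < ns (L + 1) - ns L by omega⟩ :=
      Fin.ext (show n + 1 - ns L = n - ns L + 1 by omega)
    have hchain := (z'.1 L).2 (n - ns L) (show n - ns L + 1 < ns (L + 1) - ns L by omega)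
    exact eq_of_heq (((B.tgt_heq_s6 (show n = ns L + (n - ns L) by omega) e1).trans
      (heq_of_eq hchain)).trans
      (B.src_heq_s6 (show ns L + (n - ns L + 1) = n + 1 by omega)
        (e2.trans (happ_heq _ hfin)).symm))
  · have hn1 : n + 1 = ns (L + 1) := by omega
    have hmono2 : ns (L + 1) < ns (L + 1 + 1) := hmono (Nat.lt_succ_self (L + 1))
    have hd2 : n + 1 - ns (L + 1) < ns (L + 1 + 1) - ns (L + 1) := by omega
    have e2 := untelEdge_heq B ns hmono h0 z' (le_of_eq hn1.symm) (by omega) hd2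
    have hfin2 : (⟨n + 1 - ns (L + 1), hd2⟩ : Fin (ns (L + 1 + 1) - ns (L + 1))) =
        ⟨0, show 0 < ns (L + 1 + 1) - ns (L + 1) by omega⟩ :=
      Fin.ext (show n + 1 - ns (L + 1) = 0 by omega)
    have hfin : (⟨n - ns L, hd⟩ : Fin (ns (L + 1) - ns L)) =
        ⟨ns (L + 1) - ns L - 1, show ns (L + 1) - ns L - 1 < ns (L + 1) - ns L by omega⟩ :=
      Fin.ext (show n - ns L = ns (L + 1) - ns L - 1 by omega)
    have hz' : B.castV (show ns L + (ns (L + 1) - ns L - 1) + 1 = ns (L + 1) by omega)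
        (B.tgt ((z'.1 L).1 ⟨ns (L + 1) - ns L - 1,
          show ns (L + 1) - ns L - 1 < ns (L + 1) - ns L by omega⟩))
        = B.src ((z'.1 (L + 1)).1 ⟨0, show 0 < ns (L + 1 + 1) - ns (L + 1) by omega⟩) := z'.2 L
    have hz2 : HEq (B.tgt ((z'.1 L).1 ⟨ns (L + 1) - ns L - 1,
          show ns (L + 1) - ns L - 1 < ns (L + 1) - ns L by omega⟩))
        (B.src ((z'.1 (L + 1)).1 ⟨0, show 0 < ns (L + 1 + 1) - ns (L + 1) by omega⟩)) :=
      ((B.castV_heq (show ns L + (ns (L + 1) - ns L - 1) + 1 = ns (L + 1) by omega)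
        _).symm).trans (heq_of_eq hz')
    refine eq_of_heq ?_
    refine HEq.trans (B.tgt_heq_s6 (show n = ns L + (ns (L + 1) - ns L - 1) by omega)
      (e1.trans (happ_heq _ hfin))) ?_
    refine HEq.trans hz2 ?_
    exact B.src_heq_s6 (show ns (L + 1) + 0 = n + 1 by omega)
      (e2.trans (happ_heq _ hfin2)).symm

theorem teleMap_untel (z' : (B.Telescope ns hmono h0).PathSpace) :
    B.teleMap ns hmono h0 (untel B ns hmono h0 z') = z' := by
  refine Subtype.ext (funext fun L => Subtype.ext (funext fun i => ?_))
  have hi : i.val < ns (L + 1) - ns L := i.isLt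
  have h2 : ns L + i.val < ns (L + 1) := by omega
  have hd : ns L + i.val - ns L < ns (L + 1) - ns L := by omega
  exact eq_of_heq ((untelEdge_heq B ns hmono h0 z' (Nat.le_add_right _ _) h2 hd).trans
    (happ_heq _ (Fin.ext (by omega : ns L + i.val - ns L = i.val))))

theorem teleMap_inj {w w' : B.PathSpace}
    (h : B.teleMap ns hmono h0 w = B.teleMap ns hmono h0 w') : w = w' := by
  refine Subtype.ext (funext fun n => ?_)
  have h1 : ns (levAt ns n) ≤ n := levAt_le ns h0 n
  have h2 : n < ns (levAt ns n + 1) := lt_levAt_succ ns hmono n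
  set L := levAt ns n with hLdef
  have := congrArg (fun t : (B.Telescope ns hmono h0).PathSpace =>
    (t.1 L).1 ⟨n - ns L, by omega⟩) h
  have hn : ns L + (n - ns L) = n := by omega
  rw [← hn]
  exact this

theorem untel_teleMap (w : B.PathSpace) :
    untel B ns hmono h0 (B.teleMap ns hmono h0 w) = w :=
  teleMap_inj B ns hmono h0 (teleMap_untel B ns hmono h0 (B.teleMap ns hmono h0 w))

theorem teleMap_pathLT {u v : B.PathSpace} (h : B.pathLT u v) :
    (B.Telescope ns hmono h0).pathLT (B.teleMap ns hmono h0 u) (B.teleMap ns hmono h0 v) := by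
  obtain ⟨N, helt, hup⟩ := h
  have h1 : ns (levAt ns N) ≤ N := levAt_le ns h0 N
  have h2 : N < ns (levAt ns N + 1) := lt_levAt_succ ns hmono N
  set L := levAt ns N with hLdef
  refine ⟨L, show B.telLT _ _ from ⟨N - ns L, by omega, ?_, ?_⟩, ?_⟩
  · show B.elt (u.1 (ns L + (N - ns L))) (v.1 (ns L + (N - ns L)))
    have hN : ns L + (N - ns L) = N := by omega
    rw [hN]; exact helt
  · intro i hi hgt
    show u.1 (ns L + i) = v.1 (ns L + i)
    exact hup _ (by omega)
  · intro n hn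
    refine Subtype.ext (funext fun i => ?_)
    show u.1 (ns n + i.val) = v.1 (ns n + i.val)
    have hle : ns (L + 1) ≤ ns n := hmono.monotone hn
    exact hup _ (by omega)

theorem pathLT_of_tele {u v : B.PathSpace}
    (h : (B.Telescope ns hmono h0).pathLT (B.teleMap ns hmono h0 u)
      (B.teleMap ns hmono h0 v)) : B.pathLT u v := by
  obtain ⟨L, hL, habove⟩ := h
  have hL' : B.telLT ((B.teleMap ns hmono h0 u).1 L) ((B.teleMap ns hmono h0 v).1 L) := hL
  obtain ⟨N', hN', helt, hwithin⟩ := hL'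
  refine ⟨ns L + N', helt, ?_⟩
  intro n hn
  by_cases hc : n < ns (L + 1)
  · have hw := hwithin (n - ns L) (by omega) (by omega)
    have hn2 : ns L + (n - ns L) = n := by omega
    rw [← hn2]
    exact hw
  · have hA : ns (levAt ns n) ≤ n := levAt_le ns h0 n
    have hB : n < ns (levAt ns n + 1) := lt_levAt_succ ns hmono n
    set M := levAt ns n with hMdef
    have hLM : L < M := by
      by_contra hq
      push_neg at hq
      have := hmono.monotone (show M + 1 ≤ L + 1 by omega)
      omega
    have heq := congrArg (fun t : (B.Telescope ns hmono h0).E M =>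
      t.1 ⟨n - ns M, by omega⟩) (habove M hLM)
    have hn2 : ns M + (n - ns M) = n := by omega
    rw [← hn2]
    exact heq

theorem tele_isMax {z : B.PathSpace} (h : B.IsMaxPath z) :
    (B.Telescope ns hmono h0).IsMaxPath (B.teleMap ns hmono h0 z) := by
  intro L g hg
  have hg' : B.telLT ((B.teleMap ns hmono h0 z).1 L) g := hg
  obtain ⟨N, p, helt, -⟩ := hg'
  exact h (ns L + N) _ helt

theorem tele_isMin {z : B.PathSpace} (h : B.IsMinPath z) :
    (B.Telescope ns hmono h0).IsMinPath (B.teleMap ns hmono h0 z) := by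
  intro L g hg
  have hg' : B.telLT g ((B.teleMap ns hmono h0 z).1 L) := hg
  obtain ⟨N, p, helt, -⟩ := hg'
  exact h (ns L + N) _ helt

theorem max_of_tele {z : B.PathSpace}
    (h : (B.Telescope ns hmono h0).IsMaxPath (B.teleMap ns hmono h0 z)) :
    B.IsMaxPath z := by
  intro n e' helt
  have h1 : ns (levAt ns n) ≤ n := levAt_le ns h0 n
  have h2 : n < ns (levAt ns n + 1) := lt_levAt_succ ns hmono n
  set L := levAt ns n with hLdef
  set d := n - ns L with hddef
  have hd : d < ns (L + 1) - ns L := by omega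
  have hnd : n = ns L + d := by omega
  set f := (B.teleMap ns hmono h0 z).1 L with hfdef
  have he : HEq (f.1 ⟨d, hd⟩) (z.1 n) :=
    happ_heq z.1 (by omega : ns L + d = n)
  have helt'' : B.elt (f.1 ⟨d, hd⟩) (B.castE hnd e') :=
    (B.elt_congr (by omega : ns L + d = n) he (B.castE_heq_s6 hnd e')).mpr helt
  exact h L _ (replaceBelow_telLT_right B f d hd (B.castE hnd e') helt'')

theorem min_of_untel {z' : (B.Telescope ns hmono h0).PathSpace}
    (h : (B.Telescope ns hmono h0).IsMinPath z') :
    B.IsMinPath (untel B ns hmono h0 z') := by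
  intro n e' helt
  have h1 : ns (levAt ns n) ≤ n := levAt_le ns h0 n
  have h2 : n < ns (levAt ns n + 1) := lt_levAt_succ ns hmono n
  set L := levAt ns n with hLdef
  set d := n - ns L with hddef
  have hd : d < ns (L + 1) - ns L := by omega
  have hnd : n = ns L + d := by omega
  set f := z'.1 L with hfdef
  have he : HEq (f.1 ⟨d, hd⟩) ((untel B ns hmono h0 z').1 n) :=
    (untelEdge_heq B ns hmono h0 z' h1 h2 hd).symm
  have helt'' : B.elt (B.castE hnd e') (f.1 ⟨d, hd⟩) :=
    (B.elt_congr (by omega : ns L + d = n) (B.castE_heq_s6 hnd e') he).mpr helt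
  exact h L _ (replaceBelow_telLT_left B f d hd (B.castE hnd e') helt'')

theorem tele_min_unique (hproper : B.ProperlyOrdered)
    {z₁ z₂ : (B.Telescope ns hmono h0).PathSpace}
    (h1 : (B.Telescope ns hmono h0).IsMinPath z₁)
    (h2 : (B.Telescope ns hmono h0).IsMinPath z₂) : z₁ = z₂ := by
  obtain ⟨w, -, huniq⟩ := hproper.1
  have hu : untel B ns hmono h0 z₁ = untel B ns hmono h0 z₂ :=
    (huniq _ (min_of_untel B ns hmono h0 h1)).trans
      (huniq _ (min_of_untel B ns hmono h0 h2)).symm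
  calc z₁ = B.teleMap ns hmono h0 (untel B ns hmono h0 z₁) :=
        (teleMap_untel B ns hmono h0 z₁).symm
    _ = B.teleMap ns hmono h0 (untel B ns hmono h0 z₂) := by rw [hu]
    _ = z₂ := teleMap_untel B ns hmono h0 z₂

theorem teleMap_step (T : B.PathSpace ≃ B.PathSpace) (hproper : B.ProperlyOrdered)
    (hT : B.IsVershik T)
    (T' : (B.Telescope ns hmono h0).PathSpace ≃ (B.Telescope ns hmono h0).PathSpace)
    (hT' : (B.Telescope ns hmono h0).IsVershik T') (z : B.PathSpace) :
    B.teleMap ns hmono h0 (T z) = T' (B.teleMap ns hmono h0 z) := by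
  by_cases hmax : B.IsMaxPath z
  · exact tele_min_unique B ns hmono h0 hproper
      (tele_isMin B ns hmono h0 (hT.2 z hmax))
      (hT'.2 _ (tele_isMax B ns hmono h0 hmax))
  · have hnm' : ¬ (B.Telescope ns hmono h0).IsMaxPath (B.teleMap ns hmono h0 z) :=
      fun h => hmax (max_of_tele B ns hmono h0 h)
    obtain ⟨Hs1, Hs2⟩ := hT'.1 _ hnm'
    obtain ⟨Hw1', Hw2'⟩ := hT.1 z hmax
    have Hw1 := teleMap_pathLT B ns hmono h0 Hw1'
    have Hw2 : ∀ z₀, (B.Telescope ns hmono h0).pathLT (B.teleMap ns hmono h0 z) z₀ →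
        ¬ (B.Telescope ns hmono h0).pathLT z₀ (B.teleMap ns hmono h0 (T z)) := by
      intro z₀ ha hb
      rw [← teleMap_untel B ns hmono h0 z₀] at ha hb
      exact Hw2' _ (pathLT_of_tele B ns hmono h0 ha) (pathLT_of_tele B ns hmono h0 hb)
    have hns : ¬ (B.Telescope ns hmono h0).pathLT (B.teleMap ns hmono h0 (T z))
        (T' (B.teleMap ns hmono h0 z)) := Hs2 _ Hw1
    have hnw : ¬ (B.Telescope ns hmono h0).pathLT (T' (B.teleMap ns hmono h0 z))
        (B.teleMap ns hmono h0 (T z)) := Hw2 _ Hs1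
    by_contra hne
    obtain ⟨N₁, -, hup1⟩ := Hs1
    obtain ⟨N₂, -, hup2⟩ := Hw1
    have hag : ∀ n, max N₁ N₂ < n → (B.teleMap ns hmono h0 (T z)).1 n
        = (T' (B.teleMap ns hmono h0 z)).1 n := fun n hn =>
      (hup2 n (by omega)).symm.trans (hup1 n (by omega))
    rcases (B.Telescope ns hmono h0).pathLT_total_s6 _ _ (max N₁ N₂) hag hne with h | h
    · exact hns h
    · exact hnw h

theorem teleMap_iter (T : B.PathSpace ≃ B.PathSpace) (hproper : B.ProperlyOrdered)
    (hT : B.IsVershik T)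
    (T' : (B.Telescope ns hmono h0).PathSpace ≃ (B.Telescope ns hmono h0).PathSpace)
    (hT' : (B.Telescope ns hmono h0).IsVershik T') (m : ℤ) (z : B.PathSpace) :
    B.teleMap ns hmono h0 ((B.iterZ T m) z)
      = ((B.Telescope ns hmono h0).iterZ T' m) (B.teleMap ns hmono h0 z) := by
  have hstep := teleMap_step B ns hmono h0 T hproper hT T' hT'
  have hstep' : ∀ w, B.teleMap ns hmono h0 (T.symm w)
      = T'.symm (B.teleMap ns hmono h0 w) := by
    intro w
    have := hstep (T.symm w)
    rw [Equiv.apply_symm_apply] at this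
    rw [this, Equiv.symm_apply_apply]
  induction m using Int.induction_on generalizing z with
  | zero => simp [BDiagram.iterZ]
  | succ n ih =>
      have e1 : (B.iterZ T (n + 1)) z = (B.iterZ T n) (T z) := by
        show ((T : Equiv.Perm B.PathSpace) ^ ((n : ℤ) + 1)) z = _
        rw [zpow_add_one]
        rfl
      have e2 : ((B.Telescope ns hmono h0).iterZ T' ((n : ℤ) + 1))
          (B.teleMap ns hmono h0 z)
          = ((B.Telescope ns hmono h0).iterZ T' n) (T' (B.teleMap ns hmono h0 z)) := by
        show ((T' : Equiv.Perm _) ^ ((n : ℤ) + 1)) _ = _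
        rw [zpow_add_one]
        rfl
      rw [e1, e2, ih (T z), hstep z]
  | pred n ih =>
      have e1 : (B.iterZ T (-(n : ℤ) - 1)) z = (B.iterZ T (-(n : ℤ))) (T.symm z) := by
        show ((T : Equiv.Perm B.PathSpace) ^ (-(n : ℤ) - 1)) z = _
        rw [zpow_sub_one]
        rfl
      have e2 : ((B.Telescope ns hmono h0).iterZ T' (-(n : ℤ) - 1))
          (B.teleMap ns hmono h0 z)
          = ((B.Telescope ns hmono h0).iterZ T' (-(n : ℤ)))
            (T'.symm (B.teleMap ns hmono h0 z)) := by
        show ((T' : Equiv.Perm _) ^ (-(n : ℤ) - 1)) _ = _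
        rw [zpow_sub_one]
        rfl
      rw [e1, e2, ih (T.symm z), hstep' z]

end CutTelescopingAux
/-- If a depth `k` pair in a simple, properly ordered
Bratteli–Vershik system has a `j` cut with `j ≥ ns 1`, and `ns l ≤ j < ns (l+1)`,
then the image pair under the telescoping to levels `ns` has an `l` cut. -/
theorem cut_telescoping
    (B : BDiagram) (T : B.PathSpace ≃ B.PathSpace)
    (hproper : B.ProperlyOrdered) (hsimple : B.Simple) (hT : B.IsVershik T)
    (ns : ℕ → ℕ) (hmono : StrictMono ns) (h0 : ns 0 = 0)
    (T' : (B.Telescope ns hmono h0).PathSpace ≃ (B.Telescope ns hmono h0).PathSpace)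
    (hT' : (B.Telescope ns hmono h0).IsVershik T')
    (k : ℕ) (x y : B.PathSpace) (hxy : B.DepthPair T k x y)
    (j : ℕ) (hj : ns 1 ≤ j) (hcut : B.HasCut T j x y)
    (l : ℕ) (hl₁ : ns l ≤ j) (hl₂ : j < ns (l + 1)) :
    (B.Telescope ns hmono h0).HasCut T' l
      (B.teleMap ns hmono h0 x) (B.teleMap ns hmono h0 y) := by
  obtain ⟨m, hx, hy⟩ := hcut
  have key : ∀ z : B.PathSpace,
      (∀ i : ℕ, i < j → B.IsMinEdge (((B.iterZ T m) z).1 i)) →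
      ∀ i : ℕ, i < l → (B.Telescope ns hmono h0).IsMinEdge
        ((((B.Telescope ns hmono h0).iterZ T' m) (B.teleMap ns hmono h0 z)).1 i) := by
    intro z hz i hi
    rw [← teleMap_iter B ns hmono h0 T hproper hT T' hT' m z]
    intro g hg
    have hg' : B.telLT g ((B.teleMap ns hmono h0 ((B.iterZ T m) z)).1 i) := hg
    obtain ⟨N, p, helt, -⟩ := hg'
    have hlt : ns i + N < j := by
      have hm1 := hmono.monotone (show i + 1 ≤ l from hi)
      have hm2 := hmono (Nat.lt_succ_self i)
      omega
    exact hz (ns i + N) hlt _ helt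
  exact ⟨m, fun i hi => key x hx i hi, fun i hi => key y hy i hi⟩
end
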